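/- arXiv:0806.3549 — 4 statements merged into one kernel-verified Lean document; each statement's English description precedes it below -/
import Mathlib

section
/- For all natural numbers n and real numbers ξ, ν, η, the triple sum over m from 0 to n, k from 0 to n-m, and j from 0 to m of C(n-m,k)·C(m,j)·(ξ^k ν^j / (k! j!))·η^(n-k-j) equals the single sum over r from 0 to n of C(n+1,r+1)·((ξ+ν)^r / r!)·η^(n-r). -/
open Finset

lemma key_sum_choose (j : ℕ) : ∀ n k, ∑ m ∈ Finset.range (n + 1),
    Nat.choose m j * Nat.choose (n - m) k = Nat.choose (n + 1) (j + k + 1) := by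
  intro n
  induction n with
  | zero =>
    intro k
    cases j <;> cases k <;> simp [Nat.choose]
  | succ n ih =>
    intro k
    rw [Finset.sum_range_succ]
    cases k with
    | zero =>
      simp only [Nat.choose_zero_right, mul_one]
      rw [← Finset.sum_range_succ]
      have hsub : Finset.Icc j (n + 1) ⊆ Finset.range (n + 2) := by
        intro x hx
        simp only [Finset.mem_Icc] at hx
        simp only [Finset.mem_range]
        omega
      have hzero : ∀ x ∈ Finset.range (n + 2), x ∉ Finset.Icc j (n + 1) →
          Nat.choose x j = 0 := by
        intro x hx hx'
        simp only [Finset.mem_range] at hx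
        simp only [Finset.mem_Icc, not_and, not_le] at hx'
        exact Nat.choose_eq_zero_of_lt (by omega)
      rw [← Finset.sum_subset hsub hzero, Nat.sum_Icc_choose]
    | succ k =>
      have h2 : ∀ m ∈ Finset.range (n + 1),
          Nat.choose m j * Nat.choose (n + 1 - m) (k + 1)
            = Nat.choose m j * Nat.choose (n - m) k
              + Nat.choose m j * Nat.choose (n - m) (k + 1) := by
        intro m hm
        simp only [Finset.mem_range] at hm
        have : n + 1 - m = (n - m) + 1 := by omega
        rw [this, Nat.choose_succ_succ, mul_add]
      rw [Finset.sum_congr rfl h2, Finset.sum_add_distrib, ih k, ih (k + 1)]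
      rw [show j + (k + 1) + 1 = (j + k + 1) + 1 from rfl,
        Nat.choose_succ_succ' (n + 1) (j + k + 1)]
      simp



/-- The triple-sum combinatorial identity (Lemma 3.4 of the paper):
∑_{m=0}^{n} ∑_{k=0}^{n-m} ∑_{j=0}^{m} C(n-m,k)·C(m,j)·(ξ^k ν^j/(k!j!))·η^{n-k-j}
  = ∑_{r=0}^{n} C(n+1,r+1)·((ξ+ν)^r/r!)·η^{n-r}. -/
theorem triple_sum_binomial_identity (n : ℕ) (ξ ν η : ℝ) :
    ∑ m ∈ Finset.range (n + 1), ∑ k ∈ Finset.range (n - m + 1), ∑ j ∈ Finset.range (m + 1),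
        (Nat.choose (n - m) k : ℝ) * (Nat.choose m j : ℝ) *
          (ξ ^ k * ν ^ j / ((Nat.factorial k : ℝ) * (Nat.factorial j : ℝ))) * η ^ (n - k - j)
      = ∑ r ∈ Finset.range (n + 1),
          (Nat.choose (n + 1) (r + 1) : ℝ) * ((ξ + ν) ^ r / (Nat.factorial r : ℝ)) * η ^ (n - r) := by
  set t : ℕ → ℕ → ℕ → ℝ := fun m k j =>
    (Nat.choose (n - m) k : ℝ) * (Nat.choose m j : ℝ) *
      (ξ ^ k * ν ^ j / ((Nat.factorial k : ℝ) * (Nat.factorial j : ℝ))) * η ^ (n - k - j) with ht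
  set F : ℕ → ℕ → ℝ := fun k j =>
    (Nat.choose (n + 1) (k + j + 1) : ℝ) *
      (ξ ^ k * ν ^ j / ((Nat.factorial k : ℝ) * (Nat.factorial j : ℝ))) * η ^ (n - k - j) with hF
  -- Step A: LHS equals double sum of F over the square
  have stepA : ∑ m ∈ Finset.range (n + 1), ∑ k ∈ Finset.range (n - m + 1),
      ∑ j ∈ Finset.range (m + 1), t m k j
      = ∑ k ∈ Finset.range (n + 1), ∑ j ∈ Finset.range (n + 1), F k j := by
    have e1 : ∀ m ∈ Finset.range (n + 1),
        ∑ k ∈ Finset.range (n - m + 1), ∑ j ∈ Finset.range (m + 1), t m k j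
          = ∑ k ∈ Finset.range (n + 1), ∑ j ∈ Finset.range (n + 1), t m k j := by
      intro m hm
      simp only [Finset.mem_range] at hm
      have hk : Finset.range (n - m + 1) ⊆ Finset.range (n + 1) :=
        Finset.range_subset_range.2 (by omega)
      have hj : Finset.range (m + 1) ⊆ Finset.range (n + 1) :=
        Finset.range_subset_range.2 (by omega)
      rw [Finset.sum_subset hk, Finset.sum_congr rfl]
      · intro k _
        rw [Finset.sum_subset hj]
        intro j hj1 hj2
        simp only [Finset.mem_range, not_lt] at hj1 hj2
        rw [ht]
        simp [Nat.choose_eq_zero_of_lt (show m < j by omega)]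
      · intro k hk1 hk2
        simp only [Finset.mem_range, not_lt] at hk1 hk2
        apply Finset.sum_eq_zero
        intro j _
        rw [ht]
        simp [Nat.choose_eq_zero_of_lt (show n - m < k by omega)]
    rw [Finset.sum_congr rfl e1, Finset.sum_comm]
    refine Finset.sum_congr rfl fun k _ => ?_
    rw [Finset.sum_comm]
    refine Finset.sum_congr rfl fun j _ => ?_
    have : ∑ m ∈ Finset.range (n + 1), t m k j
        = (↑(∑ m ∈ Finset.range (n + 1), Nat.choose m j * Nat.choose (n - m) k) : ℝ) *
          ((ξ ^ k * ν ^ j / ((Nat.factorial k : ℝ) * (Nat.factorial j : ℝ))) * η ^ (n - k - j)) := by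
      push_cast
      rw [Finset.sum_mul]
      refine Finset.sum_congr rfl fun m _ => ?_
      rw [ht]; ring
    rw [this, key_sum_choose j n k, hF]
    rw [show j + k + 1 = k + j + 1 by ring]
    ring
  -- Step B: RHS equals sum over triangle of F
  have stepB : ∑ r ∈ Finset.range (n + 1),
      (Nat.choose (n + 1) (r + 1) : ℝ) * ((ξ + ν) ^ r / (Nat.factorial r : ℝ)) * η ^ (n - r)
      = ∑ r ∈ Finset.range (n + 1), ∑ k ∈ Finset.range (r + 1), F k (r - k) := by
    refine Finset.sum_congr rfl fun r hr => ?_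
    simp only [Finset.mem_range] at hr
    rw [add_pow]
    rw [Finset.sum_div, Finset.mul_sum, Finset.sum_mul]
    refine Finset.sum_congr rfl fun k hk => ?_
    simp only [Finset.mem_range] at hk
    have hkr : k ≤ r := by omega
    have hfac : (Nat.factorial k : ℝ) * (Nat.factorial (r - k) : ℝ) * (Nat.choose r k : ℝ)
        = (Nat.factorial r : ℝ) := by
      rw [← Nat.cast_mul, ← Nat.cast_mul]
      norm_cast
      rw [mul_comm, ← mul_assoc]
      exact Nat.choose_mul_factorial_mul_factorial hkr
    have h1 : k + (r - k) + 1 = r + 1 := by omega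
    have h2 : n - k - (r - k) = n - r := by omega
    rw [hF]
    simp only [h1, h2]
    have hk0 : (Nat.factorial k : ℝ) ≠ 0 := Nat.cast_ne_zero.2 (Nat.factorial_ne_zero k)
    have hrk0 : (Nat.factorial (r - k) : ℝ) ≠ 0 := Nat.cast_ne_zero.2 (Nat.factorial_ne_zero _)
    have hr0 : (Nat.factorial r : ℝ) ≠ 0 := Nat.cast_ne_zero.2 (Nat.factorial_ne_zero r)
    field_simp
    rw [← hfac]
    ring
  -- Step C: square sum of F equals triangle sum
  have stepC : ∑ k ∈ Finset.range (n + 1), ∑ j ∈ Finset.range (n + 1), F k j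
      = ∑ r ∈ Finset.range (n + 1), ∑ k ∈ Finset.range (r + 1), F k (r - k) := by
    have hL : ∑ k ∈ Finset.range (n + 1), ∑ j ∈ Finset.range (n + 1), F k j
        = ∑ p ∈ (Finset.range (n + 1) ×ˢ Finset.range (n + 1)).filter
            (fun p => p.1 + p.2 ≤ n), F p.1 p.2 := by
      rw [← Finset.sum_product']
      rw [Finset.sum_filter_of_ne]
      intro p _ hp
      by_contra h
      push_neg at h
      apply hp
      rw [hF] at *
      simp only at *
      rw [Nat.choose_eq_zero_of_lt (by omega : n + 1 < p.1 + p.2 + 1)] at *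
      simp at *
    have hR : ∑ r ∈ Finset.range (n + 1), ∑ k ∈ Finset.range (r + 1), F k (r - k)
        = ∑ p ∈ (Finset.range (n + 1)).sigma (fun r => Finset.range (r + 1)),
            F p.2 (p.1 - p.2) := by
      rw [Finset.sum_sigma]
    rw [hL, hR]
    refine Finset.sum_nbij' (fun p => ⟨p.1 + p.2, p.1⟩) (fun q => (q.2, q.1 - q.2)) ?_ ?_ ?_ ?_ ?_
    · intro p hp
      simp only [Finset.mem_filter, Finset.mem_product, Finset.mem_range] at hp
      simp only [Finset.mem_sigma, Finset.mem_range]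
      omega
    · intro q hq
      simp only [Finset.mem_sigma, Finset.mem_range] at hq
      simp only [Finset.mem_filter, Finset.mem_product, Finset.mem_range]
      omega
    · rintro ⟨a, b⟩ hp
      simp only [Finset.mem_filter, Finset.mem_product, Finset.mem_range] at hp
      dsimp only
      rw [show a + b - a = b by omega]
    · rintro ⟨r, k⟩ hq
      simp only [Finset.mem_sigma, Finset.mem_range] at hq
      dsimp only
      rw [show k + (r - k) = r by omega]
    · rintro ⟨a, b⟩ hp
      simp only [Finset.mem_filter, Finset.mem_product, Finset.mem_range] at hp
      dsimp only
      rw [show a + b - a = b by omega]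
  rw [stepA, stepC, stepB]
end

section
/- Suppose there exist η > 0 and h > 0 such that for all x,y ∈ X and s < t ≤ s+h, ∫_s^t ∫_X p(s,x,u,z)·p(u,z,t,y)·q(u,z) dm(z) du ≤ η·p(s,x,t,y). Then with β = η/h, for ALL s < t and x,y ∈ X: ∫_s^t ∫_X p(s,x,u,z)·p(u,z,t,y)·q(u,z) dm(z) du ≤ (η + β(t-s))·p(s,x,t,y). -/
open MeasureTheory Set
open scoped ENNReal

private lemma expand_left {X : Type*} [MeasurableSpace X] (μ : Measure X) [SigmaFinite μ]
    (p : ℝ → X → ℝ → X → ℝ≥0∞)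
    (hmp : Measurable fun a : ℝ × X × ℝ × X => p a.1 a.2.1 a.2.2.1 a.2.2.2)
    (hCK : ∀ s u t : ℝ, ∀ x y : X, s < u → u < t →
      ∫⁻ z, p s x u z * p u z t y ∂μ = p s x t y)
    (s r : ℝ) (x : X) (hsr : s < r)
    (S : Set ℝ) (hS : MeasurableSet S) (hSsub : S ⊆ Set.Ioi r)
    (Φ : ℝ → X → ℝ≥0∞) (hΦ : Measurable fun a : ℝ × X => Φ a.1 a.2) :
    ∫⁻ u in S, ∫⁻ z, p s x u z * Φ u z ∂μ
      = ∫⁻ w, p s x r w * (∫⁻ u in S, ∫⁻ z, p r w u z * Φ u z ∂μ) ∂μ := by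
  calc
    ∫⁻ u in S, ∫⁻ z, p s x u z * Φ u z ∂μ
        = ∫⁻ u in S, ∫⁻ z, ∫⁻ w, p s x r w * (p r w u z * Φ u z) ∂μ ∂μ := by
      refine setLIntegral_congr_fun hS (fun u hu => ?_)
      refine lintegral_congr fun z => ?_
      rw [← hCK s r u x z hsr (hSsub hu),
        ← lintegral_mul_const _ (show Measurable fun w => p s x r w * p r w u z by fun_prop)]
      exact lintegral_congr fun w => by ring
    _ = ∫⁻ u in S, (∫⁻ w, ∫⁻ z, p s x r w * (p r w u z * Φ u z) ∂μ ∂μ) := by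
      refine setLIntegral_congr_fun hS (fun u _ => ?_)
      exact lintegral_lintegral_swap
        ((show Measurable fun zw : X × X => p s x r zw.2 * (p r zw.2 u zw.1 * Φ u zw.1)
          by fun_prop).aemeasurable)
    _ = ∫⁻ w, (∫⁻ u in S, ∫⁻ z, p s x r w * (p r w u z * Φ u z) ∂μ) ∂μ := by
      refine lintegral_lintegral_swap (Measurable.aemeasurable ?_)
      exact Measurable.lintegral_prod_right'
        (f := fun a : (ℝ × X) × X => p s x r a.1.2 * (p r a.1.2 a.1.1 a.2 * Φ a.1.1 a.2))
        (by fun_prop)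
    _ = ∫⁻ w, p s x r w * (∫⁻ u in S, ∫⁻ z, p r w u z * Φ u z ∂μ) ∂μ := by
      refine lintegral_congr fun w => ?_
      rw [← lintegral_const_mul _ (show Measurable fun u => ∫⁻ z, p r w u z * Φ u z ∂μ from
        Measurable.lintegral_prod_right'
          (f := fun a : ℝ × X => p r w a.1 a.2 * Φ a.1 a.2) (by fun_prop))]
      refine setLIntegral_congr_fun hS (fun u _ => ?_)
      rw [lintegral_const_mul _ (show Measurable fun z => p r w u z * Φ u z by fun_prop)]

private lemma expand_right {X : Type*} [MeasurableSpace X] (μ : Measure X) [SigmaFinite μ]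
    (p : ℝ → X → ℝ → X → ℝ≥0∞)
    (hmp : Measurable fun a : ℝ × X × ℝ × X => p a.1 a.2.1 a.2.2.1 a.2.2.2)
    (hCK : ∀ s u t : ℝ, ∀ x y : X, s < u → u < t →
      ∫⁻ z, p s x u z * p u z t y ∂μ = p s x t y)
    (r t : ℝ) (y : X) (hrt : r < t)
    (S : Set ℝ) (hS : MeasurableSet S) (hSsub : S ⊆ Set.Iio r)
    (Ψ : ℝ → X → ℝ≥0∞) (hΨ : Measurable fun a : ℝ × X => Ψ a.1 a.2) :
    ∫⁻ u in S, ∫⁻ z, Ψ u z * p u z t y ∂μ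
      = ∫⁻ w, (∫⁻ u in S, ∫⁻ z, Ψ u z * p u z r w ∂μ) * p r w t y ∂μ := by
  calc
    ∫⁻ u in S, ∫⁻ z, Ψ u z * p u z t y ∂μ
        = ∫⁻ u in S, ∫⁻ z, ∫⁻ w, (Ψ u z * p u z r w) * p r w t y ∂μ ∂μ := by
      refine setLIntegral_congr_fun hS (fun u hu => ?_)
      refine lintegral_congr fun z => ?_
      rw [← hCK u r t z y (hSsub hu) hrt,
        ← lintegral_const_mul _ (show Measurable fun w => p u z r w * p r w t y by fun_prop)]
      exact lintegral_congr fun w => by ring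
    _ = ∫⁻ u in S, (∫⁻ w, ∫⁻ z, (Ψ u z * p u z r w) * p r w t y ∂μ ∂μ) := by
      refine setLIntegral_congr_fun hS (fun u _ => ?_)
      exact lintegral_lintegral_swap
        ((show Measurable fun zw : X × X => (Ψ u zw.1 * p u zw.1 r zw.2) * p r zw.2 t y
          by fun_prop).aemeasurable)
    _ = ∫⁻ w, (∫⁻ u in S, ∫⁻ z, (Ψ u z * p u z r w) * p r w t y ∂μ) ∂μ := by
      refine lintegral_lintegral_swap (Measurable.aemeasurable ?_)
      exact Measurable.lintegral_prod_right'
        (f := fun a : (ℝ × X) × X => (Ψ a.1.1 a.2 * p a.1.1 a.2 r a.1.2) * p r a.1.2 t y)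
        (by fun_prop)
    _ = ∫⁻ w, (∫⁻ u in S, ∫⁻ z, Ψ u z * p u z r w ∂μ) * p r w t y ∂μ := by
      refine lintegral_congr fun w => ?_
      rw [← lintegral_mul_const _ (show Measurable fun u => ∫⁻ z, Ψ u z * p u z r w ∂μ from
        Measurable.lintegral_prod_right'
          (f := fun a : ℝ × X => Ψ a.1 a.2 * p a.1 a.2 r w) (by fun_prop))]
      refine setLIntegral_congr_fun hS (fun u _ => ?_)
      rw [lintegral_mul_const _ (show Measurable fun z => Ψ u z * p u z r w by fun_prop)]

private lemma step_lemma {X : Type*} [MeasurableSpace X] (μ : Measure X) [SigmaFinite μ]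
    (p : ℝ → X → ℝ → X → ℝ≥0∞) (q : ℝ → X → ℝ≥0∞)
    (hmp : Measurable fun a : ℝ × X × ℝ × X => p a.1 a.2.1 a.2.2.1 a.2.2.2)
    (hmq : Measurable fun a : ℝ × X => q a.1 a.2)
    (hCK : ∀ s u t : ℝ, ∀ x y : X, s < u → u < t →
      ∫⁻ z, p s x u z * p u z t y ∂μ = p s x t y)
    (A B : ℝ≥0∞) (s r t : ℝ) (hsr : s < r) (hrt : r < t)
    (hA : ∀ x y : X, (∫⁻ u in Set.Ioo s r, ∫⁻ z, p s x u z * p u z r y * q u z ∂μ)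
      ≤ A * p s x r y)
    (hB : ∀ x y : X, (∫⁻ u in Set.Ioo r t, ∫⁻ z, p r x u z * p u z t y * q u z ∂μ)
      ≤ B * p r x t y)
    (x y : X) :
    (∫⁻ u in Set.Ioo s t, ∫⁻ z, p s x u z * p u z t y * q u z ∂μ)
      ≤ (A + B) * p s x t y := by
  have hsplit : (∫⁻ u in Set.Ioo s t, ∫⁻ z, p s x u z * p u z t y * q u z ∂μ)
      = (∫⁻ u in Set.Ioo s r, ∫⁻ z, p s x u z * p u z t y * q u z ∂μ)
        + ∫⁻ u in Set.Ioo r t, ∫⁻ z, p s x u z * p u z t y * q u z ∂μ := by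
    rw [← Set.Ioo_union_Ico_eq_Ioo hsr hrt.le,
      lintegral_union measurableSet_Ico
        (Set.disjoint_left.mpr fun a ha hb => absurd hb.1 (not_le.mpr ha.2)),
      setLIntegral_congr (μ := volume) (Ioo_ae_eq_Ico (a := r) (b := t)).symm]
  have piece1 : (∫⁻ u in Set.Ioo s r, ∫⁻ z, p s x u z * p u z t y * q u z ∂μ)
      ≤ A * p s x t y := by
    have e1 : (∫⁻ u in Set.Ioo s r, ∫⁻ z, p s x u z * p u z t y * q u z ∂μ)
        = ∫⁻ u in Set.Ioo s r, ∫⁻ z, (p s x u z * q u z) * p u z t y ∂μ :=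
      setLIntegral_congr_fun measurableSet_Ioo
        (fun u _ => lintegral_congr fun z => by ring)
    rw [e1, expand_right μ p hmp hCK r t y hrt (Set.Ioo s r) measurableSet_Ioo
      (fun u hu => hu.2) (fun u z => p s x u z * q u z) (by fun_prop)]
    calc
      ∫⁻ w, (∫⁻ u in Set.Ioo s r, ∫⁻ z, (p s x u z * q u z) * p u z r w ∂μ) * p r w t y ∂μ
          ≤ ∫⁻ w, (A * p s x r w) * p r w t y ∂μ := by
        refine lintegral_mono fun w => mul_le_mul_left ?_ _
        have e2 : (∫⁻ u in Set.Ioo s r, ∫⁻ z, (p s x u z * q u z) * p u z r w ∂μ)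
            = ∫⁻ u in Set.Ioo s r, ∫⁻ z, p s x u z * p u z r w * q u z ∂μ :=
          setLIntegral_congr_fun measurableSet_Ioo
            (fun u _ => lintegral_congr fun z => by ring)
        rw [e2]; exact hA x w
      _ = A * p s x t y := by
        rw [← hCK s r t x y hsr hrt,
          ← lintegral_const_mul _ (show Measurable fun w => p s x r w * p r w t y by fun_prop)]
        exact lintegral_congr fun w => by ring
  have piece2 : (∫⁻ u in Set.Ioo r t, ∫⁻ z, p s x u z * p u z t y * q u z ∂μ)
      ≤ B * p s x t y := by
    have e1 : (∫⁻ u in Set.Ioo r t, ∫⁻ z, p s x u z * p u z t y * q u z ∂μ)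
        = ∫⁻ u in Set.Ioo r t, ∫⁻ z, p s x u z * (p u z t y * q u z) ∂μ :=
      setLIntegral_congr_fun measurableSet_Ioo
        (fun u _ => lintegral_congr fun z => by ring)
    rw [e1, expand_left μ p hmp hCK s r x hsr (Set.Ioo r t) measurableSet_Ioo
      (fun u hu => hu.1) (fun u z => p u z t y * q u z) (by fun_prop)]
    calc
      ∫⁻ w, p s x r w * (∫⁻ u in Set.Ioo r t, ∫⁻ z, p r w u z * (p u z t y * q u z) ∂μ) ∂μ
          ≤ ∫⁻ w, p s x r w * (B * p r w t y) ∂μ := by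
        refine lintegral_mono fun w => mul_le_mul_right ?_ _
        have e2 : (∫⁻ u in Set.Ioo r t, ∫⁻ z, p r w u z * (p u z t y * q u z) ∂μ)
            = ∫⁻ u in Set.Ioo r t, ∫⁻ z, p r w u z * p u z t y * q u z ∂μ :=
          setLIntegral_congr_fun measurableSet_Ioo
            (fun u _ => lintegral_congr fun z => by ring)
        rw [e2]; exact hB w y
      _ = B * p s x t y := by
        rw [← hCK s r t x y hsr hrt,
          ← lintegral_const_mul _ (show Measurable fun w => p s x r w * p r w t y by fun_prop)]
        exact lintegral_congr fun w => by ring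
  rw [hsplit, add_mul]
  exact add_le_add piece1 piece2

/-- Lemma 3.2: if the relative bound with constant η holds on time windows of length h,
then with β = η/h the bound η + β(t-s) holds for all s < t. -/
theorem relative_bound_all_times {X : Type*} [MeasurableSpace X] (μ : Measure X)
    (p : ℝ → X → ℝ → X → ℝ≥0∞) (q : ℝ → X → ℝ≥0∞)
    (hmp : Measurable fun a : ℝ × X × ℝ × X => p a.1 a.2.1 a.2.2.1 a.2.2.2)
    (hmq : Measurable fun a : ℝ × X => q a.1 a.2)
    (hzero : ∀ s t : ℝ, ∀ x y : X, t ≤ s → p s x t y = 0)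
    (hpos : ∀ s t : ℝ, ∀ x y : X, s < t → 0 < p s x t y ∧ p s x t y < ⊤)
    (hCK : ∀ s u t : ℝ, ∀ x y : X, s < u → u < t →
      ∫⁻ z, p s x u z * p u z t y ∂μ = p s x t y)
    (η h : ℝ) (hη : 0 < η) (hh : 0 < h)
    (hsmall : ∀ s t : ℝ, ∀ x y : X, s < t → t ≤ s + h →
      (∫⁻ u in Set.Ioo s t, ∫⁻ z, p s x u z * p u z t y * q u z ∂μ)
        ≤ ENNReal.ofReal η * p s x t y) :
    ∀ s t : ℝ, ∀ x y : X, s < t →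
      (∫⁻ u in Set.Ioo s t, ∫⁻ z, p s x u z * p u z t y * q u z ∂μ)
        ≤ ENNReal.ofReal (η + (η / h) * (t - s)) * p s x t y := by
  intro s t x y hst
  -- μ is σ-finite thanks to positivity and Chapman-Kolmogorov
  have hSF : SigmaFinite μ := by
    set f : X → ℝ≥0∞ := fun z => p 0 x 1 z * p 1 z 2 y with hf
    have hfm : Measurable f := by fun_prop
    have hfpos : ∀ z, 0 < f z := fun z =>
      ENNReal.mul_pos (hpos 0 1 x z one_pos).1.ne' (hpos 1 2 z y one_lt_two).1.ne'
    have hfint : (∫⁻ z, f z ∂μ) < ⊤ := by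
      rw [show (∫⁻ z, f z ∂μ) = p 0 x 2 y from hCK 0 1 2 x y one_pos one_lt_two]
      exact (hpos 0 2 x y two_pos).2
    refine Measure.FiniteSpanningSetsIn.sigmaFinite (C := Set.univ)
      { set := fun n => {z | ((n : ℝ≥0∞) + 1)⁻¹ ≤ f z}
        set_mem := fun n => Set.mem_univ _
        finite := fun n => ?_
        spanning := ?_ }
    · refine lt_of_le_of_lt (meas_ge_le_lintegral_div hfm.aemeasurable ?_ ?_) ?_
      · exact ENNReal.inv_ne_zero.mpr (by simp)
      · exact ENNReal.inv_ne_top.mpr (by simp)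
      · exact ENNReal.div_lt_top hfint.ne (ENNReal.inv_ne_zero.mpr (by simp))
    · refine Set.eq_univ_iff_forall.mpr fun z => ?_
      obtain ⟨n, hn⟩ := ENNReal.exists_inv_nat_lt (hfpos z).ne'
      refine Set.mem_iUnion.mpr ⟨n, ?_⟩
      exact le_trans (ENNReal.inv_le_inv.mpr le_self_add) hn.le
  -- key induction: bound (n+1)·η on windows of length (n+1)·h
  have key : ∀ n : ℕ, ∀ s t : ℝ, ∀ x y : X, s < t → t ≤ s + ((n : ℝ) + 1) * h →
      (∫⁻ u in Set.Ioo s t, ∫⁻ z, p s x u z * p u z t y * q u z ∂μ)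
        ≤ ENNReal.ofReal (((n : ℝ) + 1) * η) * p s x t y := by
    intro n
    induction n with
    | zero =>
      intro s t x y hst hle
      simpa using hsmall s t x y hst (by push_cast at hle; linarith)
    | succ n ih =>
      intro s t x y hst hle
      by_cases hc : t ≤ s + h
      · refine (hsmall s t x y hst hc).trans
          (mul_le_mul_left (ENNReal.ofReal_le_ofReal ?_) _)
        nlinarith [Nat.cast_nonneg (α := ℝ) n]
      · push_neg at hc
        set r := t - h with hr
        have hsr : s < r := by simp only [hr]; linarith
        have hrt : r < t := by simp only [hr]; linarith
        have hle' : r ≤ s + ((n : ℝ) + 1) * h := by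
          push_cast at hle ⊢; simp only [hr]; linarith
        have hbound := step_lemma μ p q hmp hmq hCK
          (ENNReal.ofReal (((n : ℝ) + 1) * η)) (ENNReal.ofReal η) s r t hsr hrt
          (fun x y => ih s r x y hsr hle')
          (fun x y => hsmall r t x y hrt (by simp only [hr]; linarith)) x y
        refine hbound.trans (le_of_eq ?_)
        rw [← ENNReal.ofReal_add (by positivity) hη.le]
        congr 1
        push_cast; ring
  -- choose n = ⌊(t-s)/h⌋
  set n := ⌊(t - s) / h⌋₊ with hn
  have h1 : (n : ℝ) * h ≤ t - s := by
    rw [← le_div_iff₀ hh]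
    exact Nat.floor_le (div_nonneg (by linarith) hh.le)
  have h2 : t ≤ s + ((n : ℝ) + 1) * h := by
    have := Nat.lt_floor_add_one ((t - s) / h)
    rw [div_lt_iff₀ hh] at this
    push_cast at this ⊢
    linarith
  refine (key n s t x y hst h2).trans
    (mul_le_mul_left (ENNReal.ofReal_le_ofReal ?_) _)
  have h3 : (n : ℝ) * η = (η / h) * ((n : ℝ) * h) := by field_simp
  have h4 : (η / h) * ((n : ℝ) * h) ≤ (η / h) * (t - s) :=
    mul_le_mul_of_nonneg_left h1 (by positivity)
  linarith
end

section
/- Assume the bound ∫_s^t ∫_X p(s,x,u,z)·p(u,z,t,y)·q(u,z) dm(z) du ≤ (η + β(t-s))·p(s,x,t,y) holds for all s < t, x,y ∈ X, with constants 0 ≤ η < 1 and β ≥ 0. Then for all n ≥ 0, s < t, x,y ∈ X: p_n(s,x,t,y) ≤ p(s,x,t,y)·∑_{k=0}^n C(n,k)·(β(t-s))^k/k!·η^(n-k). -/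
open MeasureTheory Set
open scoped ENNReal

open MeasureTheory Set intervalIntegral

noncomputable def Sf (η β : ℝ) (n : ℕ) (τ : ℝ) : ℝ :=
  ∑ k ∈ Finset.range (n + 1),
    (Nat.choose n k : ℝ) * (β * τ) ^ k / (Nat.factorial k : ℝ) * η ^ (n - k)

noncomputable def Df (η β : ℝ) (n : ℕ) (σ : ℝ) : ℝ :=
  ∑ k ∈ Finset.range n,
    (Nat.choose n (k+1) : ℝ) * β ^ (k+1) * σ ^ k / (Nat.factorial k : ℝ) * η ^ (n - (k+1))

lemma Sf_zero (η β : ℝ) (n : ℕ) : Sf η β n 0 = η ^ n := by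
  unfold Sf
  rw [Finset.sum_eq_single 0]
  · simp
  · intro k hk hk0
    rcases Nat.exists_eq_succ_of_ne_zero hk0 with ⟨m, rfl⟩
    simp [pow_succ]
  · simp

lemma Sf_nonneg {η β : ℝ} (hη : 0 ≤ η) (hβ : 0 ≤ β) (n : ℕ) {τ : ℝ} (hτ : 0 ≤ τ) :
    0 ≤ Sf η β n τ := by
  apply Finset.sum_nonneg
  intro k _
  have h1 : (0:ℝ) ≤ (β * τ) ^ k := pow_nonneg (mul_nonneg hβ hτ) k
  have h2 : (0:ℝ) < (Nat.factorial k : ℝ) := by positivity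
  positivity

lemma Df_nonneg {η β : ℝ} (hη : 0 ≤ η) (hβ : 0 ≤ β) (n : ℕ) {σ : ℝ} (hσ : 0 ≤ σ) :
    0 ≤ Df η β n σ := by
  apply Finset.sum_nonneg
  intro k _
  have h2 : (0:ℝ) < (Nat.factorial k : ℝ) := by positivity
  positivity

lemma continuous_Df (η β : ℝ) (n : ℕ) : Continuous (Df η β n) := by
  unfold Df
  exact continuous_finset_sum _ fun k _ => by fun_prop

lemma continuous_Sf (η β : ℝ) (n : ℕ) : Continuous (Sf η β n) := by
  unfold Sf
  exact continuous_finset_sum _ fun k _ => by fun_prop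

lemma hasDerivAt_Sf (η β : ℝ) (n : ℕ) (τ : ℝ) :
    HasDerivAt (Sf η β n) (Df η β n τ) τ := by
  have h : HasDerivAt (Sf η β n)
      (∑ k ∈ Finset.range (n + 1),
        (Nat.choose n k : ℝ) * β ^ k / (Nat.factorial k : ℝ) * η ^ (n - k)
          * (k * τ ^ (k - 1))) τ := by
    have : ∀ k ∈ Finset.range (n+1), HasDerivAt
        (fun τ : ℝ => (Nat.choose n k : ℝ) * (β * τ) ^ k / (Nat.factorial k : ℝ) * η ^ (n - k))
        ((Nat.choose n k : ℝ) * β ^ k / (Nat.factorial k : ℝ) * η ^ (n - k)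
          * (k * τ ^ (k - 1))) τ := by
      intro k _
      have hfun : (fun τ : ℝ => (Nat.choose n k : ℝ) * (β * τ) ^ k / (Nat.factorial k : ℝ) * η ^ (n - k))
          = fun τ : ℝ => ((Nat.choose n k : ℝ) * β ^ k / (Nat.factorial k : ℝ) * η ^ (n - k)) * τ ^ k := by
        funext τ; rw [mul_pow]; ring
      rw [hfun]
      have h2 := (hasDerivAt_pow k τ).const_mul
          ((Nat.choose n k : ℝ) * β ^ k / (Nat.factorial k : ℝ) * η ^ (n - k))
      convert h2 using 1
    exact HasDerivAt.fun_sum this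
  convert h using 1
  rw [Finset.sum_range_succ', Df]
  have h0 : (Nat.choose n 0 : ℝ) * β ^ 0 / (Nat.factorial 0 : ℝ) * η ^ (n - 0) * ((0:ℕ) * τ ^ (0 - 1)) = 0 := by
    simp
  rw [h0, add_zero]
  apply Finset.sum_congr rfl
  intro k _
  have hfact : (Nat.factorial (k+1) : ℝ) = (k+1) * (Nat.factorial k : ℝ) := by
    rw [Nat.factorial_succ]; push_cast; ring
  have hk : (0:ℝ) < (Nat.factorial k : ℝ) := by positivity
  rw [hfact]
  simp only [Nat.add_sub_cancel]
  push_cast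
  field_simp

lemma Df_succ (η β : ℝ) (n : ℕ) (σ : ℝ) :
    Df η β (n+1) σ = η * Df η β n σ + β * Sf η β n σ := by
  unfold Df Sf
  rw [Finset.mul_sum, Finset.mul_sum, Finset.sum_range_succ]
  have hlast : (Nat.choose (n+1) (n+1) : ℝ) * β ^ (n+1) * σ ^ n / (Nat.factorial n : ℝ) * η ^ ((n+1) - (n+1))
      = β * ((Nat.choose n n : ℝ) * (β * σ) ^ n / (Nat.factorial n : ℝ) * η ^ (n - n)) := by
    simp [mul_pow]
    ring
  rw [Finset.sum_range_succ, hlast]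
  rw [← add_assoc]
  congr 1
  rw [← Finset.sum_add_distrib]
  apply Finset.sum_congr rfl
  intro k hk
  have hkn : k < n := Finset.mem_range.mp hk
  have hch : (Nat.choose (n+1) (k+1) : ℝ) = (Nat.choose n k : ℝ) + (Nat.choose n (k+1) : ℝ) := by
    rw [Nat.choose_succ_succ]; push_cast; ring
  have hsub1 : (n+1) - (k+1) = n - k := by omega
  have hsub2 : n - k = (n - (k+1)) + 1 := by omega
  rw [hch, hsub1, hsub2, pow_succ, mul_pow]
  ring

lemma integral_Df (η β : ℝ) (n : ℕ) (τ : ℝ) :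
    ∫ σ in (0:ℝ)..τ, Df η β n σ = Sf η β n τ - η ^ n := by
  have h : ∀ x y : ℝ,
      (fun x : ℝ => (∫ σ in (0:ℝ)..x, Df η β n σ) - Sf η β n x) x
        = (fun x : ℝ => (∫ σ in (0:ℝ)..x, Df η β n σ) - Sf η β n x) y := by
    apply is_const_of_deriv_eq_zero
    · intro x
      exact (((continuous_Df η β n).integral_hasStrictDerivAt 0 x).hasDerivAt.sub
        (hasDerivAt_Sf η β n x)).differentiableAt
    · intro x
      have hd := ((continuous_Df η β n).integral_hasStrictDerivAt 0 x).hasDerivAt.sub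
        (hasDerivAt_Sf η β n x)
      exact hd.deriv.trans (sub_self _)
  have h0 := h τ 0
  simp only [intervalIntegral.integral_same, Sf_zero, mul_zero, sub_zero, add_zero] at h0
  ring_nf at h0 ⊢
  linarith


lemma key_identity (η β : ℝ) (n : ℕ) (τ : ℝ) :
    η ^ n * (η + β * τ) + (∫ σ in (0:ℝ)..τ, Df η β n σ * (η + β * (τ - σ)))
      = Sf η β (n+1) τ := by
  have hDc := continuous_Df η β n
  have hEc : Continuous (fun σ : ℝ => σ * Df η β n σ) := continuous_id.mul hDc
  have hsplit : (∫ σ in (0:ℝ)..τ, Df η β n σ * (η + β * (τ - σ)))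
      = (η + β * τ) * (∫ σ in (0:ℝ)..τ, Df η β n σ)
        - β * ∫ σ in (0:ℝ)..τ, σ * Df η β n σ := by
    rw [← intervalIntegral.integral_const_mul, ← intervalIntegral.integral_const_mul,
      ← intervalIntegral.integral_sub (show IntervalIntegrable (fun σ => (η + β * τ) * Df η β n σ) MeasureTheory.volume 0 τ from
          (continuous_const.mul hDc).intervalIntegrable _ _)
        (show IntervalIntegrable (fun σ => β * (σ * Df η β n σ)) MeasureTheory.volume 0 τ from
          (continuous_const.mul hEc).intervalIntegrable _ _)]
    apply intervalIntegral.integral_congr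
    intro σ _
    ring
  rw [hsplit, integral_Df]
  have hG : ∀ x : ℝ, HasDerivAt
      (fun x : ℝ => (η + β * x) * Sf η β n x
        - β * (∫ σ in (0:ℝ)..x, σ * Df η β n σ) - Sf η β (n+1) x)
      (β * Sf η β n x + (η + β * x) * Df η β n x
        - β * (x * Df η β n x) - Df η β (n+1) x) x := by
    intro x
    have h1 : HasDerivAt (fun x : ℝ => η + β * x) β x := by
      simpa using ((hasDerivAt_id x).const_mul β).const_add η
    have h2 := h1.mul (hasDerivAt_Sf η β n x)
    have h3 := ((hEc.integral_hasStrictDerivAt 0 x).hasDerivAt).const_mul β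
    have h4 := (h2.sub h3).sub (hasDerivAt_Sf η β (n+1) x)
    exact h4
  have h : ∀ x y : ℝ,
      (fun x : ℝ => (η + β * x) * Sf η β n x
        - β * (∫ σ in (0:ℝ)..x, σ * Df η β n σ) - Sf η β (n+1) x) x
      = (fun x : ℝ => (η + β * x) * Sf η β n x
        - β * (∫ σ in (0:ℝ)..x, σ * Df η β n σ) - Sf η β (n+1) x) y := by
    apply is_const_of_deriv_eq_zero
    · intro x; exact (hG x).differentiableAt
    · intro x
      rw [(hG x).deriv, Df_succ]
      ring
  have h0 := h τ 0
  simp only [intervalIntegral.integral_same, Sf_zero, mul_zero, sub_zero, add_zero] at h0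
  linear_combination h0


open MeasureTheory Set
open scoped ENNReal

section helpers
variable {X : Type*} [MeasurableSpace X]

lemma meas_p4 {p : ℝ → X → ℝ → X → ℝ≥0∞}
    (hmp : Measurable fun a : ℝ × X × ℝ × X => p a.1 a.2.1 a.2.2.1 a.2.2.2)
    {α : Type*} [MeasurableSpace α] {f : α → ℝ} {g : α → X} {h : α → ℝ} {i : α → X}
    (hf : Measurable f) (hg : Measurable g) (hh : Measurable h) (hi : Measurable i) :
    Measurable fun ω => p (f ω) (g ω) (h ω) (i ω) :=
  hmp.comp (hf.prodMk (hg.prodMk (hh.prodMk hi)))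

lemma meas_q2 {q : ℝ → X → ℝ≥0∞}
    (hmq : Measurable fun a : ℝ × X => q a.1 a.2)
    {α : Type*} [MeasurableSpace α] {f : α → ℝ} {g : α → X}
    (hf : Measurable f) (hg : Measurable g) :
    Measurable fun ω => q (f ω) (g ω) :=
  hmq.comp (hf.prodMk hg)

lemma conv_lemma (μ : Measure X) {D : X → ℝ≥0∞} (hD : Measurable D)
    (hD0 : ∀ z, D z ≠ 0) (hDt : ∀ z, D z ≠ ⊤) {f : X → ℝ≥0∞} (hf : Measurable f) :
    ∫⁻ z, f z ∂μ = ∫⁻ z, f z * (D z)⁻¹ ∂(μ.withDensity D) := by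
  rw [lintegral_withDensity_eq_lintegral_mul μ hD
    (show Measurable fun z => f z * (D z)⁻¹ from hf.mul hD.inv)]
  apply lintegral_congr
  intro z
  simp only [Pi.mul_apply]
  rw [mul_comm (f z), ← mul_assoc, ENNReal.mul_inv_cancel (hD0 z) (hDt z), one_mul]

end helpers

lemma tailA {X : Type*} [MeasurableSpace X] (μ : Measure X)
    (p : ℝ → X → ℝ → X → ℝ≥0∞) (q : ℝ → X → ℝ≥0∞)
    (hmp : Measurable fun a : ℝ × X × ℝ × X => p a.1 a.2.1 a.2.2.1 a.2.2.2)
    (hmq : Measurable fun a : ℝ × X => q a.1 a.2)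
    (hpos : ∀ s t : ℝ, ∀ x y : X, s < t → 0 < p s x t y ∧ p s x t y < ⊤)
    (hCK : ∀ s u t : ℝ, ∀ x y : X, s < u → u < t →
      ∫⁻ z, p s x u z * p u z t y ∂μ = p s x t y)
    (η β : ℝ)
    (hbound : ∀ s t : ℝ, ∀ x y : X, s < t →
      (∫⁻ u in Set.Ioo s t, ∫⁻ z, p s x u z * p u z t y * q u z ∂μ)
        ≤ ENNReal.ofReal (η + β * (t - s)) * p s x t y)
    (s v t : ℝ) (x y : X) (hsv : s < v) (hvt : v < t) :
    (∫⁻ u in Set.Ioo v t, ∫⁻ z, p s x u z * p u z t y * q u z ∂μ)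
      ≤ ENNReal.ofReal (η + β * (t - v)) * p s x t y := by
  have hst : s < t := hsv.trans hvt
  set Dv : X → ℝ≥0∞ := fun w => p s x v w * p v w t y with hDvdef
  have mDv : Measurable Dv :=
    (meas_p4 hmp measurable_const measurable_const measurable_const measurable_id).mul
      (meas_p4 hmp measurable_const measurable_id measurable_const measurable_const)
  have hDv0 : ∀ w, Dv w ≠ 0 := fun w =>
    mul_ne_zero (hpos s v x w hsv).1.ne' (hpos v t w y hvt).1.ne'
  have hDvt : ∀ w, Dv w ≠ ⊤ := fun w =>
    ENNReal.mul_ne_top (hpos s v x w hsv).2.ne (hpos v t w y hvt).2.ne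
  set ν := μ.withDensity Dv with hνdef
  have hν_univ : ν Set.univ = p s x t y := by
    rw [hνdef, withDensity_apply _ MeasurableSet.univ, Measure.restrict_univ]
    exact hCK s v t x y hsv hvt
  haveI : IsFiniteMeasure ν := ⟨by rw [hν_univ]; exact (hpos s t x y hst).2⟩
  have conv : ∀ {f : X → ℝ≥0∞}, Measurable f →
      ∫⁻ z, f z ∂μ = ∫⁻ z, f z * (Dv z)⁻¹ ∂ν := fun hf =>
    conv_lemma μ mDv hDv0 hDvt hf
  set G : ℝ → X → X → ℝ≥0∞ := fun u z w =>
    p s x v w * p v w u z * (Dv w)⁻¹ * (p u z t y * q u z * (Dv z)⁻¹) with hGdef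
  -- measurability of G in ((u,w),z)
  have mG : Measurable fun a : (ℝ × X) × X => G a.1.1 a.2 a.1.2 := by
    apply Measurable.mul
    · apply Measurable.mul
      · apply Measurable.mul
        · exact meas_p4 hmp measurable_const measurable_const measurable_const
            measurable_fst.snd
        · exact meas_p4 hmp measurable_const measurable_fst.snd measurable_fst.fst
            measurable_snd
      · exact (mDv.comp measurable_fst.snd).inv
    · apply Measurable.mul
      · apply Measurable.mul
        · exact meas_p4 hmp measurable_fst.fst measurable_snd measurable_const
            measurable_const
        · exact meas_q2 hmq measurable_fst.fst measurable_snd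
      · exact (mDv.comp measurable_snd).inv
  -- step 1: pointwise in u ∈ Ioo v t, rewrite the z-integral
  have step1 : ∀ u ∈ Set.Ioo v t,
      (∫⁻ z, p s x u z * p u z t y * q u z ∂μ)
        = ∫⁻ w, (∫⁻ z, G u z w ∂ν) ∂ν := by
    intro u hu
    have hvu : v < u := hu.1
    have hut : u < t := hu.2
    have m1 : Measurable fun z => p s x u z * p u z t y * q u z :=
      ((meas_p4 hmp measurable_const measurable_const measurable_const measurable_id).mul
        (meas_p4 hmp measurable_const measurable_id measurable_const measurable_const)).mul
        (meas_q2 hmq measurable_const measurable_id)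
    rw [conv m1]
    have hz : ∀ z, (p s x u z * p u z t y * q u z) * (Dv z)⁻¹
        = ∫⁻ w, G u z w ∂ν := by
      intro z
      have hCKz : p s x u z = ∫⁻ w, p s x v w * p v w u z ∂μ :=
        (hCK s v u x z hsv hvu).symm
      have mw : Measurable fun w => p s x v w * p v w u z * (Dv w)⁻¹ :=
        ((meas_p4 hmp measurable_const measurable_const measurable_const measurable_id).mul
          (meas_p4 hmp measurable_const measurable_id measurable_const measurable_const)).mul
          mDv.inv
      have : p s x u z = ∫⁻ w, p s x v w * p v w u z * (Dv w)⁻¹ ∂ν := by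
        rw [hCKz]
        exact conv ((meas_p4 hmp measurable_const measurable_const measurable_const
          measurable_id).mul
          (meas_p4 hmp measurable_const measurable_id measurable_const measurable_const))
      calc (p s x u z * p u z t y * q u z) * (Dv z)⁻¹
          = p s x u z * (p u z t y * q u z * (Dv z)⁻¹) := by ring
        _ = (∫⁻ w, p s x v w * p v w u z * (Dv w)⁻¹ ∂ν) * (p u z t y * q u z * (Dv z)⁻¹) := by
            rw [← this]
        _ = ∫⁻ w, G u z w ∂ν := (lintegral_mul_const _ mw).symm
    rw [lintegral_congr hz]
    -- swap z and w
    exact lintegral_lintegral_swap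
      ((mG.comp ((measurable_const.prodMk measurable_snd).prodMk measurable_fst)).aemeasurable)
  have step2 : (∫⁻ u in Set.Ioo v t, ∫⁻ z, p s x u z * p u z t y * q u z ∂μ)
      = ∫⁻ u in Set.Ioo v t, ∫⁻ w, (∫⁻ z, G u z w ∂ν) ∂ν := by
    rw [← lintegral_indicator measurableSet_Ioo, ← lintegral_indicator measurableSet_Ioo]
    apply lintegral_congr
    intro u
    by_cases hu : u ∈ Set.Ioo v t
    · simp only [Set.indicator_of_mem hu]; exact step1 u hu
    · simp only [Set.indicator_of_notMem hu]
  rw [step2]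
  have mF : Measurable fun a : ℝ × X => ∫⁻ z, G a.1 z a.2 ∂ν :=
    Measurable.lintegral_prod_right' (f := fun a : (ℝ × X) × X => G a.1.1 a.2 a.1.2) mG
  rw [lintegral_lintegral_swap mF.aemeasurable]
  have inner : ∀ w, (∫⁻ u in Set.Ioo v t, ∫⁻ z, G u z w ∂ν)
      ≤ p s x v w * (Dv w)⁻¹ * (ENNReal.ofReal (η + β * (t - v)) * p v w t y) := by
    intro w
    have hc : p s x v w * (Dv w)⁻¹ ≠ ⊤ :=
      ENNReal.mul_ne_top (hpos s v x w hsv).2.ne (ENNReal.inv_ne_top.mpr (hDv0 w))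
    have hre : ∀ u, (∫⁻ z, G u z w ∂ν)
        = (p s x v w * (Dv w)⁻¹) * ∫⁻ z, (p v w u z * p u z t y * q u z) * (Dv z)⁻¹ ∂ν := by
      intro u
      rw [← lintegral_const_mul' _ _ hc]
      apply lintegral_congr
      intro z
      simp only [hGdef]
      ring
    calc (∫⁻ u in Set.Ioo v t, ∫⁻ z, G u z w ∂ν)
        = (p s x v w * (Dv w)⁻¹)
            * ∫⁻ u in Set.Ioo v t, ∫⁻ z, (p v w u z * p u z t y * q u z) * (Dv z)⁻¹ ∂ν := by
          rw [← lintegral_const_mul' _ _ hc]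
          exact lintegral_congr fun u => hre u
      _ = (p s x v w * (Dv w)⁻¹)
            * ∫⁻ u in Set.Ioo v t, ∫⁻ z, p v w u z * p u z t y * q u z ∂μ := by
          congr 1
          apply lintegral_congr
          intro u
          refine (conv ?_).symm
          exact ((meas_p4 hmp measurable_const measurable_const measurable_const
              measurable_id).mul
            (meas_p4 hmp measurable_const measurable_id measurable_const measurable_const)).mul
            (meas_q2 hmq measurable_const measurable_id)
      _ ≤ _ := mul_le_mul_right (hbound v t w y hvt) _
  calc ∫⁻ w, (∫⁻ u in Set.Ioo v t, ∫⁻ z, G u z w ∂ν) ∂ν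
      ≤ ∫⁻ w, p s x v w * (Dv w)⁻¹ * (ENNReal.ofReal (η + β * (t - v)) * p v w t y) ∂ν :=
        lintegral_mono inner
    _ = ENNReal.ofReal (η + β * (t - v)) * ∫⁻ w, (Dv w) * (Dv w)⁻¹ ∂ν := by
        rw [← lintegral_const_mul' _ _ ENNReal.ofReal_ne_top]
        apply lintegral_congr
        intro w
        simp only [hDvdef]
        ring
    _ = ENNReal.ofReal (η + β * (t - v)) * p s x t y := by
        congr 1
        rw [← conv mDv]
        exact hCK s v t x y hsv hvt

lemma W_decomp (η β : ℝ) (hη : 0 ≤ η) (hβ : 0 ≤ β) (n : ℕ) (s u : ℝ) (hsu : s < u) :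
    ENNReal.ofReal (Sf η β n (u - s))
      = ENNReal.ofReal (η ^ n) + ∫⁻ v in Set.Ioo s u, ENNReal.ofReal (Df η β n (v - s)) := by
  have hc : Continuous fun v : ℝ => Df η β n (v - s) :=
    (continuous_Df η β n).comp (continuous_sub_right s)
  have hint : IntegrableOn (fun v : ℝ => Df η β n (v - s)) (Set.Ioo s u) :=
    (hc.integrableOn_Icc).mono_set Set.Ioo_subset_Icc_self
  have hnn : 0 ≤ᵐ[volume.restrict (Set.Ioo s u)] fun v : ℝ => Df η β n (v - s) := by
    filter_upwards [ae_restrict_mem measurableSet_Ioo] with v hv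
    exact Df_nonneg hη hβ n (by linarith [hv.1])
  have hlin : (∫⁻ v in Set.Ioo s u, ENNReal.ofReal (Df η β n (v - s)))
      = ENNReal.ofReal (∫ v in Set.Ioo s u, Df η β n (v - s)) :=
    (ofReal_integral_eq_lintegral_ofReal hint hnn).symm
  have hreal : (∫ v in Set.Ioo s u, Df η β n (v - s)) = Sf η β n (u - s) - η ^ n := by
    rw [← integral_Ioc_eq_integral_Ioo, ← intervalIntegral.integral_of_le hsu.le,
      intervalIntegral.integral_comp_sub_right _ s, sub_self, integral_Df]
  have hge : 0 ≤ Sf η β n (u - s) - η ^ n := by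
    rw [← hreal]
    apply setIntegral_nonneg measurableSet_Ioo
    intro v hv
    exact Df_nonneg hη hβ n (by linarith [hv.1])
  rw [hlin, hreal, ← ENNReal.ofReal_add (by positivity) hge]
  congr 1
  ring

lemma ofReal_integral_step (η β : ℝ) (hη : 0 ≤ η) (hβ : 0 ≤ β) (n : ℕ) (s t : ℝ) (hst : s < t) :
    (∫⁻ v in Set.Ioo s t, ENNReal.ofReal (Df η β n (v - s) * (η + β * (t - v))))
      = ENNReal.ofReal (∫ σ in (0:ℝ)..(t - s), Df η β n σ * (η + β * ((t - s) - σ))) := by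
  have hc : Continuous fun v : ℝ => Df η β n (v - s) * (η + β * (t - v)) := by
    apply Continuous.mul
    · exact (continuous_Df η β n).comp (continuous_sub_right s)
    · fun_prop
  have hint : IntegrableOn (fun v : ℝ => Df η β n (v - s) * (η + β * (t - v))) (Set.Ioo s t) :=
    (hc.integrableOn_Icc).mono_set Set.Ioo_subset_Icc_self
  have hnn : 0 ≤ᵐ[volume.restrict (Set.Ioo s t)]
      fun v : ℝ => Df η β n (v - s) * (η + β * (t - v)) := by
    filter_upwards [ae_restrict_mem measurableSet_Ioo] with v hv
    exact mul_nonneg (Df_nonneg hη hβ n (by linarith [hv.1]))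
      (by nlinarith [hv.2])
  rw [← ofReal_integral_eq_lintegral_ofReal hint hnn]
  congr 1
  rw [← integral_Ioc_eq_integral_Ioo, ← intervalIntegral.integral_of_le hst.le]
  have key := intervalIntegral.integral_comp_sub_right
    (a := s) (b := t) (fun σ => Df η β n σ * (η + β * ((t - s) - σ))) s
  rw [sub_self] at key
  rw [← key]
  apply intervalIntegral.integral_congr
  intro v _
  show Df η β n (v - s) * (η + β * (t - v))
      = Df η β n (v - s) * (η + β * ((t - s) - (v - s)))
  have h : t - v = (t - s) - (v - s) := by ring
  rw [h]


/-- The terms of the perturbation series: `pseq μ p q 0 = p` and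
`pseq μ p q (n+1) (s,x,t,y) = ∫_s^t ∫_X pseq n (s,x,u,z) p(u,z,t,y) q(u,z) dμ(z) du`. -/
noncomputable def pseq {X : Type*} [MeasurableSpace X] (μ : Measure X)
    (p : ℝ → X → ℝ → X → ℝ≥0∞) (q : ℝ → X → ℝ≥0∞) : ℕ → ℝ → X → ℝ → X → ℝ≥0∞
  | 0 => p
  | n + 1 => fun s x t y =>
      ∫⁻ u in Set.Ioo s t, ∫⁻ z, pseq μ p q n s x u z * p u z t y * q u z ∂μ

/-- Lemma 3.5: under the bound ∫∫ p p q ≤ (η + β(t-s)) p with 0 ≤ η < 1, β ≥ 0,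
each term of the perturbation series satisfies
p_n ≤ p · ∑_{k=0}^n C(n,k) (β(t-s))^k/k! η^{n-k}. -/
theorem pseq_upper_bound {X : Type*} [MeasurableSpace X] (μ : Measure X)
    (p : ℝ → X → ℝ → X → ℝ≥0∞) (q : ℝ → X → ℝ≥0∞)
    (hmp : Measurable fun a : ℝ × X × ℝ × X => p a.1 a.2.1 a.2.2.1 a.2.2.2)
    (hmq : Measurable fun a : ℝ × X => q a.1 a.2)
    (hzero : ∀ s t : ℝ, ∀ x y : X, t ≤ s → p s x t y = 0)
    (hpos : ∀ s t : ℝ, ∀ x y : X, s < t → 0 < p s x t y ∧ p s x t y < ⊤)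
    (hCK : ∀ s u t : ℝ, ∀ x y : X, s < u → u < t →
      ∫⁻ z, p s x u z * p u z t y ∂μ = p s x t y)
    (η β : ℝ) (hη0 : 0 ≤ η) (hη1 : η < 1) (hβ : 0 ≤ β)
    (hbound : ∀ s t : ℝ, ∀ x y : X, s < t →
      (∫⁻ u in Set.Ioo s t, ∫⁻ z, p s x u z * p u z t y * q u z ∂μ)
        ≤ ENNReal.ofReal (η + β * (t - s)) * p s x t y)
    (n : ℕ) (s t : ℝ) (x y : X) (hst : s < t) :
    pseq μ p q n s x t y
      ≤ p s x t y * ENNReal.ofReal (∑ k ∈ Finset.range (n + 1),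
          (Nat.choose n k : ℝ) * (β * (t - s)) ^ k / (Nat.factorial k : ℝ) * η ^ (n - k)) := by
  induction n generalizing s t x y hst with
  | zero =>
    show p s x t y ≤ p s x t y * ENNReal.ofReal (Sf η β 0 (t - s))
    have h1 : Sf η β 0 (t - s) = 1 := by
      unfold Sf; simp
    rw [h1, ENNReal.ofReal_one, mul_one]
  | succ n ih =>
    show pseq μ p q (n + 1) s x t y ≤ p s x t y * ENNReal.ofReal (Sf η β (n + 1) (t - s))
    have hτpos : (0:ℝ) < t - s := by linarith
    have hmid1 : s < (s + t) / 2 := by linarith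
    have hmid2 : (s + t) / 2 < t := by linarith
    set D : X → ℝ≥0∞ := fun z => p s x ((s + t) / 2) z * p ((s + t) / 2) z t y with hDdef
    have mD : Measurable D :=
      (meas_p4 hmp measurable_const measurable_const measurable_const measurable_id).mul
        (meas_p4 hmp measurable_const measurable_id measurable_const measurable_const)
    have hD0 : ∀ z, D z ≠ 0 := fun z =>
      mul_ne_zero (hpos s ((s + t) / 2) x z hmid1).1.ne' (hpos ((s + t) / 2) t z y hmid2).1.ne'
    have hDt : ∀ z, D z ≠ ⊤ := fun z =>
      ENNReal.mul_ne_top (hpos s ((s + t) / 2) x z hmid1).2.ne (hpos ((s + t) / 2) t z y hmid2).2.ne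
    set μ' := μ.withDensity D with hμ'def
    have hμ'univ : μ' Set.univ = p s x t y := by
      rw [hμ'def, withDensity_apply _ MeasurableSet.univ, Measure.restrict_univ]
      exact hCK s ((s + t) / 2) t x y hmid1 hmid2
    haveI : IsFiniteMeasure μ' := ⟨by rw [hμ'univ]; exact (hpos s t x y hst).2⟩
    have conv : ∀ {f : X → ℝ≥0∞}, Measurable f →
        ∫⁻ z, f z ∂μ = ∫⁻ z, f z * (D z)⁻¹ ∂μ' :=
      fun hf => conv_lemma μ mD hD0 hDt hf
    set F : ℝ → X → ℝ≥0∞ := fun u z => p s x u z * p u z t y * q u z with hFdef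
    have mF : Measurable fun a : ℝ × X => F a.1 a.2 :=
      ((meas_p4 hmp measurable_const measurable_const measurable_fst measurable_snd).mul
        (meas_p4 hmp measurable_fst measurable_snd measurable_const measurable_const)).mul
        (meas_q2 hmq measurable_fst measurable_snd)
    set h' : ℝ → ℝ≥0∞ := fun u => ∫⁻ z, F u z * (D z)⁻¹ ∂μ' with hh'def
    have mh' : Measurable h' :=
      Measurable.lintegral_prod_right' (f := fun a : ℝ × X => F a.1 a.2 * (D a.2)⁻¹)
        (mF.mul ((mD.comp measurable_snd).inv))
    have hFu : ∀ u, Measurable fun z => F u z :=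
      fun u => mF.comp (measurable_const.prodMk measurable_id)
    have hconvF : ∀ u, (∫⁻ z, F u z ∂μ) = h' u := fun u => conv (hFu u)
    set W : ℝ → ℝ≥0∞ := fun u => ENNReal.ofReal (Sf η β n (u - s)) with hWdef
    set g : ℝ → ℝ≥0∞ := fun v => ENNReal.ofReal (Df η β n (v - s)) with hgdef
    have mg : Measurable g :=
      (((continuous_Df η β n).comp (continuous_sub_right s)).measurable).ennreal_ofReal
    have hgtop : ∀ v, g v ≠ ⊤ := fun v => by rw [hgdef]; exact ENNReal.ofReal_ne_top
    have hWtop : ∀ u, W u ≠ ⊤ := fun u => by rw [hWdef]; exact ENNReal.ofReal_ne_top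
    set P := p s x t y with hPdef
    have hPtop : P ≠ ⊤ := (hpos s t x y hst).2.ne
    -- Step II : bound pseq (n+1) by the weighted integral of h'
    have stepII : pseq μ p q (n + 1) s x t y ≤ ∫⁻ u in Set.Ioo s t, W u * h' u := by
      show (∫⁻ u in Set.Ioo s t, ∫⁻ z, pseq μ p q n s x u z * p u z t y * q u z ∂μ) ≤ _
      rw [← lintegral_indicator measurableSet_Ioo, ← lintegral_indicator measurableSet_Ioo]
      apply lintegral_mono
      intro u
      by_cases hu : u ∈ Set.Ioo s t
      · simp only [Set.indicator_of_mem hu]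
        have hbz : ∀ z, pseq μ p q n s x u z * p u z t y * q u z ≤ W u * F u z := by
          intro z
          have h1 : pseq μ p q n s x u z ≤ p s x u z * ENNReal.ofReal (Sf η β n (u - s)) :=
            ih s u x z hu.1
          calc pseq μ p q n s x u z * p u z t y * q u z
              ≤ p s x u z * ENNReal.ofReal (Sf η β n (u - s)) * p u z t y * q u z := by gcongr
            _ = W u * F u z := by simp only [hWdef, hFdef]; ring
        calc (∫⁻ z, pseq μ p q n s x u z * p u z t y * q u z ∂μ)
            ≤ ∫⁻ z, W u * F u z ∂μ := lintegral_mono hbz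
          _ = W u * ∫⁻ z, F u z ∂μ := lintegral_const_mul' _ _ (hWtop u)
          _ = W u * h' u := by rw [hconvF u]
      · simp only [Set.indicator_of_notMem hu]
        exact le_rfl
    -- tail bounds for h'
    have tails : ∀ v, s ≤ v → v < t →
        (∫⁻ u in Set.Ioo v t, h' u) ≤ ENNReal.ofReal (η + β * (t - v)) * P := by
      intro v hsv hvt
      have hrw : (∫⁻ u in Set.Ioo v t, h' u) = ∫⁻ u in Set.Ioo v t, ∫⁻ z, F u z ∂μ :=
        lintegral_congr fun u => (hconvF u).symm
      rw [hrw]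
      simp only [hFdef, hPdef]
      rcases eq_or_lt_of_le hsv with rfl | hlt
      · exact hbound s t x y hvt
      · exact tailA μ p q hmp hmq hpos hCK η β hbound s v t x y hlt hvt
    -- Step III
    have hW : ∀ u ∈ Set.Ioo s t, W u = ENNReal.ofReal (η ^ n) + ∫⁻ v in Set.Ioo s u, g v :=
      fun u hu => W_decomp η β hη0 hβ n s u hu.1
    have e1 : (∫⁻ u in Set.Ioo s t, W u * h' u)
        = ∫⁻ u in Set.Ioo s t,
            (ENNReal.ofReal (η ^ n) * h' u + (∫⁻ v in Set.Ioo s u, g v) * h' u) := by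
      rw [← lintegral_indicator measurableSet_Ioo, ← lintegral_indicator measurableSet_Ioo]
      apply lintegral_congr
      intro u
      by_cases hu : u ∈ Set.Ioo s t
      · simp only [Set.indicator_of_mem hu]
        rw [hW u hu, add_mul]
      · simp only [Set.indicator_of_notMem hu]
    set K : ℝ → ℝ → ℝ≥0∞ := fun u v => (Set.Ioo s u).indicator g v with hKdef
    have mKu : ∀ u, Measurable (K u) := fun u => mg.indicator measurableSet_Ioo
    have mK2 : Measurable fun a : ℝ × ℝ => K a.1 a.2 := by
      have heq : (fun a : ℝ × ℝ => K a.1 a.2)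
          = fun a : ℝ × ℝ => if a.2 ∈ Set.Ioo s a.1 then g a.2 else 0 := by
        funext a
        rw [hKdef]
        simp [Set.indicator_apply]
      rw [heq]
      have hms : MeasurableSet {a : ℝ × ℝ | a.2 ∈ Set.Ioo s a.1} := by
        apply MeasurableSet.inter
        · exact measurableSet_lt measurable_const measurable_snd
        · exact measurableSet_lt measurable_snd measurable_fst
      exact Measurable.ite hms (mg.comp measurable_snd) measurable_const
    have e2 : ∀ u ∈ Set.Ioo s t, (∫⁻ v in Set.Ioo s u, g v) = ∫⁻ v in Set.Ioo s t, K u v := by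
      intro u hu
      rw [← lintegral_indicator measurableSet_Ioo, ← lintegral_indicator measurableSet_Ioo]
      apply lintegral_congr
      intro v
      rw [hKdef]
      show (Set.Ioo s u).indicator g v = (Set.Ioo s t).indicator ((Set.Ioo s u).indicator g) v
      rw [Set.indicator_indicator, Set.inter_eq_self_of_subset_right
        (Set.Ioo_subset_Ioo_right hu.2.le)]
    have e3 : (∫⁻ u in Set.Ioo s t, (∫⁻ v in Set.Ioo s u, g v) * h' u)
        = ∫⁻ v in Set.Ioo s t, ∫⁻ u in Set.Ioo s t, K u v * h' u := by
      have h31 : (∫⁻ u in Set.Ioo s t, (∫⁻ v in Set.Ioo s u, g v) * h' u)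
          = ∫⁻ u in Set.Ioo s t, ∫⁻ v in Set.Ioo s t, K u v * h' u := by
        rw [← lintegral_indicator measurableSet_Ioo, ← lintegral_indicator measurableSet_Ioo]
        apply lintegral_congr
        intro u
        by_cases hu : u ∈ Set.Ioo s t
        · simp only [Set.indicator_of_mem hu]
          rw [e2 u hu, ← lintegral_mul_const _ (mKu u)]
        · simp only [Set.indicator_of_notMem hu]
      rw [h31]
      exact lintegral_lintegral_swap (mK2.mul (mh'.comp measurable_fst)).aemeasurable
    have e4 : ∀ v ∈ Set.Ioo s t,
        (∫⁻ u in Set.Ioo s t, K u v * h' u) = g v * ∫⁻ u in Set.Ioo v t, h' u := by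
      intro v hv
      rw [← lintegral_const_mul' _ _ (hgtop v),
        ← lintegral_indicator measurableSet_Ioo, ← lintegral_indicator measurableSet_Ioo]
      apply lintegral_congr
      intro u
      by_cases hu : u ∈ Set.Ioo v t
      · have hu' : u ∈ Set.Ioo s t := ⟨lt_trans hv.1 hu.1, hu.2⟩
        have hvmem : v ∈ Set.Ioo s u := ⟨hv.1, hu.1⟩
        simp only [Set.indicator_of_mem hu, Set.indicator_of_mem hu', hKdef,
          Set.indicator_of_mem hvmem]
      · by_cases hu2 : u ∈ Set.Ioo s t
        · have hvnot : v ∉ Set.Ioo s u := fun hmem => hu ⟨hmem.2, hu2.2⟩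
          simp only [Set.indicator_of_mem hu2, Set.indicator_of_notMem hu, hKdef,
            Set.indicator_of_notMem hvnot, zero_mul, mul_zero]
        · simp only [Set.indicator_of_notMem hu, Set.indicator_of_notMem hu2, mul_zero]
    have e5 : (∫⁻ v in Set.Ioo s t, ∫⁻ u in Set.Ioo s t, K u v * h' u)
        ≤ ∫⁻ v in Set.Ioo s t, g v * (ENNReal.ofReal (η + β * (t - v)) * P) := by
      rw [← lintegral_indicator measurableSet_Ioo, ← lintegral_indicator measurableSet_Ioo]
      apply lintegral_mono
      intro v
      by_cases hv : v ∈ Set.Ioo s t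
      · simp only [Set.indicator_of_mem hv]
        rw [e4 v hv]
        exact mul_le_mul_right (tails v hv.1.le hv.2) _
      · simp only [Set.indicator_of_notMem hv]
        exact le_rfl
    have p1 : (∫⁻ u in Set.Ioo s t, ENNReal.ofReal (η ^ n) * h' u)
        ≤ ENNReal.ofReal (η ^ n) * (ENNReal.ofReal (η + β * (t - s)) * P) := by
      rw [lintegral_const_mul' _ _ ENNReal.ofReal_ne_top]
      exact mul_le_mul_right (tails s le_rfl hst) _
    have stepIII : (∫⁻ u in Set.Ioo s t, W u * h' u)
        ≤ ENNReal.ofReal (η ^ n) * (ENNReal.ofReal (η + β * (t - s)) * P)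
          + ∫⁻ v in Set.Ioo s t, g v * (ENNReal.ofReal (η + β * (t - v)) * P) := by
      calc (∫⁻ u in Set.Ioo s t, W u * h' u)
          = ∫⁻ u in Set.Ioo s t,
              (ENNReal.ofReal (η ^ n) * h' u + (∫⁻ v in Set.Ioo s u, g v) * h' u) := e1
        _ = (∫⁻ u in Set.Ioo s t, ENNReal.ofReal (η ^ n) * h' u)
              + ∫⁻ u in Set.Ioo s t, (∫⁻ v in Set.Ioo s u, g v) * h' u :=
            lintegral_add_left (measurable_const.mul mh') _
        _ ≤ _ := add_le_add p1 (by rw [e3]; exact e5)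
    -- final computation
    have hpt : (∫⁻ v in Set.Ioo s t, g v * (ENNReal.ofReal (η + β * (t - v)) * P))
        = (∫⁻ v in Set.Ioo s t, ENNReal.ofReal (Df η β n (v - s) * (η + β * (t - v)))) * P := by
      rw [← lintegral_mul_const' P _ hPtop,
        ← lintegral_indicator measurableSet_Ioo, ← lintegral_indicator measurableSet_Ioo]
      apply lintegral_congr
      intro v
      by_cases hv : v ∈ Set.Ioo s t
      · simp only [Set.indicator_of_mem hv, hgdef]
        rw [ENNReal.ofReal_mul (Df_nonneg hη0 hβ n (by linarith [hv.1]))]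
        ring
      · simp only [Set.indicator_of_notMem hv]
    have hintnn : 0 ≤ ∫ σ in (0:ℝ)..(t - s), Df η β n σ * (η + β * ((t - s) - σ)) := by
      apply intervalIntegral.integral_nonneg hτpos.le
      intro σ hσ
      exact mul_nonneg (Df_nonneg hη0 hβ n hσ.1) (by nlinarith [hσ.2])
    have final : ENNReal.ofReal (η ^ n) * (ENNReal.ofReal (η + β * (t - s)) * P)
        + (∫⁻ v in Set.Ioo s t, g v * (ENNReal.ofReal (η + β * (t - v)) * P))
        = P * ENNReal.ofReal (Sf η β (n + 1) (t - s)) := by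
      rw [hpt, ofReal_integral_step η β hη0 hβ n s t hst, ← mul_assoc,
        ← ENNReal.ofReal_mul (by positivity : (0:ℝ) ≤ η ^ n)]
      rw [mul_comm (ENNReal.ofReal (η ^ n * (η + β * (t - s)))) P,
        mul_comm (ENNReal.ofReal (∫ σ in (0:ℝ)..(t - s),
          Df η β n σ * (η + β * ((t - s) - σ)))) P,
        ← mul_add P, ← ENNReal.ofReal_add (by positivity) hintnn, key_identity]
    exact stepII.trans (stepIII.trans (le_of_eq final))
end

section
/- Under the bound ∫_s^t ∫_X p(s,x,u,z)·p(u,z,t,y)·q(u,z) dm(z) du ≤ (η + β(t-s))·p(s,x,t,y) for all s < t with 0 ≤ η < 1, β ≥ 0, the perturbation series p̃_q = ∑_{n=0}^∞ p_n satisfies, for all s < t and x,y ∈ X: p̃_q(s,x,t,y) ≤ (1/(1-η))·exp(β(t-s)/(1-η))·p(s,x,t,y). -/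
open MeasureTheory Set
open scoped ENNReal

lemma my_sigmaFinite {X : Type*} [MeasurableSpace X] {μ : Measure X} {f : X → ℝ≥0∞}
    (hf : Measurable f) (hpos : ∀ z, 0 < f z) (hfin : ∫⁻ z, f z ∂μ < ⊤) : SigmaFinite μ := by
  constructor
  refine ⟨⟨fun n => {z | ((n : ℝ≥0∞) + 1)⁻¹ ≤ f z}, fun _ => trivial, ?_, ?_⟩⟩
  · intro n
    have h := meas_ge_le_lintegral_div (μ := μ) hf.aemeasurable (ε := ((n : ℝ≥0∞) + 1)⁻¹)
      (by simp) (by simp [ENNReal.inv_ne_top])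
    refine lt_of_le_of_lt h ?_
    rw [ENNReal.div_eq_inv_mul, inv_inv]
    exact ENNReal.mul_lt_top (by simp) hfin
  · ext z
    simp only [mem_iUnion, mem_setOf_eq, mem_univ, iff_true]
    obtain ⟨n, hn⟩ := ENNReal.exists_inv_nat_lt (hpos z).ne'
    exact ⟨n, le_trans (by gcongr; simp) hn.le⟩

lemma my_intA (a K s u : ℝ) :
    ∫ v in s..u, (a * K) * Real.exp (a * (v - s)) = K * Real.exp (a * (u - s)) - K := by
  have key : ∀ v ∈ Set.uIcc s u, HasDerivAt (fun v => K * Real.exp (a * (v - s)))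
      ((a * K) * Real.exp (a * (v - s))) v := by
    intro v _
    have h1 : HasDerivAt (fun v : ℝ => a * (v - s)) a v := by
      simpa using ((hasDerivAt_id v).sub_const s).const_mul a
    have h2 := (Real.hasDerivAt_exp (a * (v - s))).comp v h1
    have h3 := h2.const_mul K
    exact h3.congr_deriv (by ring)
  rw [intervalIntegral.integral_eq_sub_of_hasDerivAt key
    (Continuous.intervalIntegrable (by continuity) _ _)]
  simp [mul_comm]

lemma my_intA' (β C s u : ℝ) :
    ∫ v in s..u, β * C ^ 2 * Real.exp (β * C * (v - s)) = C * Real.exp (β * C * (u - s)) - C := by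
  have h : (fun v => β * C ^ 2 * Real.exp (β * C * (v - s)))
      = fun v => (β * C * C) * Real.exp (β * C * (v - s)) := by funext v; ring
  rw [h, my_intA]

lemma my_intB (η β C s t : ℝ) :
    ∫ v in s..t, β * C ^ 2 * Real.exp (β * C * (v - s)) * (η + β * (t - v))
      = Real.exp (β * C * (t - s)) * (η * C + 1) - (η * C + β * C * (t - s) + 1) := by
  have key : ∀ v ∈ Set.uIcc s t,
      HasDerivAt (fun v => Real.exp (β * C * (v - s)) * (η * C + β * C * (t - v) + 1))
      (β * C ^ 2 * Real.exp (β * C * (v - s)) * (η + β * (t - v))) v := by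
    intro v _
    have h1 : HasDerivAt (fun v : ℝ => β * C * (v - s)) (β * C) v := by
      simpa using ((hasDerivAt_id v).sub_const s).const_mul (β * C)
    have h2 := (Real.hasDerivAt_exp (β * C * (v - s))).comp v h1
    have h3 : HasDerivAt (fun v : ℝ => η * C + β * C * (t - v) + 1) (-(β * C)) v := by
      have h0 : HasDerivAt (fun v : ℝ => t - v) (-1) v := (hasDerivAt_id v).const_sub t
      simpa using ((h0.const_mul (β * C)).const_add (η * C)).add_const 1
    have h4 := h2.mul h3
    simp only [Function.comp_def] at h4
    exact h4.congr_deriv (by ring)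
  rw [intervalIntegral.integral_eq_sub_of_hasDerivAt key
    (Continuous.intervalIntegrable (by continuity) _ _)]
  simp

section
variable {X : Type*} [MeasurableSpace X]

lemma pseq_meas (μ : Measure X) (p : ℝ → X → ℝ → X → ℝ≥0∞) (q : ℝ → X → ℝ≥0∞) [SFinite μ]
    (hmp : Measurable fun a : ℝ × X × ℝ × X => p a.1 a.2.1 a.2.2.1 a.2.2.2)
    (hmq : Measurable fun a : ℝ × X => q a.1 a.2)
    (n : ℕ) (s : ℝ) (x : X) :
    Measurable fun a : ℝ × X => pseq μ p q n s x a.1 a.2 := by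
  induction n with
  | zero =>
    exact hmp.comp (measurable_const.prodMk (measurable_const.prodMk
      (measurable_fst.prodMk measurable_snd)))
  | succ n ih =>
    have hE : MeasurableSet {b : (ℝ × X) × ℝ × X | s < b.2.1 ∧ b.2.1 < b.1.1} :=
      (measurableSet_lt measurable_const (measurable_snd.comp measurable_id).fst).inter
        (measurableSet_lt measurable_snd.fst measurable_fst.fst)
    set f0 : ((ℝ × X) × ℝ × X) → ℝ≥0∞ := fun b =>
      pseq μ p q n s x b.2.1 b.2.2 * p b.2.1 b.2.2 b.1.1 b.1.2 * q b.2.1 b.2.2 with hf0def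
    have hm1 : Measurable fun b : (ℝ × X) × ℝ × X => pseq μ p q n s x b.2.1 b.2.2 :=
      ih.comp measurable_snd
    have hm2 : Measurable fun b : (ℝ × X) × ℝ × X => p b.2.1 b.2.2 b.1.1 b.1.2 :=
      hmp.comp (measurable_snd.fst.prodMk (measurable_snd.snd.prodMk
        (measurable_fst.fst.prodMk measurable_fst.snd)))
    have hm3 : Measurable fun b : (ℝ × X) × ℝ × X => q b.2.1 b.2.2 := hmq.comp measurable_snd
    have hf0 : Measurable f0 := (hm1.mul hm2).mul hm3
    set e : ((ℝ × X) × ℝ × X) → ℝ≥0∞ :=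
      {b : (ℝ × X) × ℝ × X | s < b.2.1 ∧ b.2.1 < b.1.1}.indicator f0 with hedef
    have he : Measurable e := hf0.indicator hE
    have key : (fun a : ℝ × X => pseq μ p q (n+1) s x a.1 a.2)
        = fun a : ℝ × X => ∫⁻ w : ℝ × X, e (a, w) ∂((volume : Measure ℝ).prod μ) := by
      funext a
      have hsec : AEMeasurable (fun w : ℝ × X => e (a, w)) ((volume : Measure ℝ).prod μ) :=
        (he.comp measurable_prodMk_left).aemeasurable
      rw [lintegral_prod _ hsec]
      show (∫⁻ u in Ioo s a.1, ∫⁻ z, pseq μ p q n s x u z * p u z a.1 a.2 * q u z ∂μ) = _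
      rw [← lintegral_indicator measurableSet_Ioo]
      congr 1; funext u
      by_cases hu : u ∈ Ioo s a.1
      · rw [indicator_of_mem hu]
        congr 1; funext z
        rw [hedef, indicator_of_mem (by exact ⟨hu.1, hu.2⟩)]
      · rw [indicator_of_notMem hu]
        symm
        have : ∀ z : X, e ((a.1, a.2), (u, z)) = 0 := by
          intro z
          rw [hedef, indicator_of_notMem]
          intro hc
          exact hu ⟨hc.1, hc.2⟩
        simp only [this, lintegral_zero]
    rw [key]
    exact Measurable.lintegral_prod_right' he

lemma tail_bound (μ : Measure X) [SFinite μ]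
    (p : ℝ → X → ℝ → X → ℝ≥0∞) (q : ℝ → X → ℝ≥0∞)
    (hmp : Measurable fun a : ℝ × X × ℝ × X => p a.1 a.2.1 a.2.2.1 a.2.2.2)
    (hmq : Measurable fun a : ℝ × X => q a.1 a.2)
    (hpos : ∀ s t : ℝ, ∀ x y : X, s < t → 0 < p s x t y ∧ p s x t y < ⊤)
    (hCK : ∀ s u t : ℝ, ∀ x y : X, s < u → u < t →
      ∫⁻ z, p s x u z * p u z t y ∂μ = p s x t y)
    (η β : ℝ)
    (hbound : ∀ s t : ℝ, ∀ x y : X, s < t →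
      (∫⁻ u in Set.Ioo s t, ∫⁻ z, p s x u z * p u z t y * q u z ∂μ)
        ≤ ENNReal.ofReal (η + β * (t - s)) * p s x t y)
    (s v t : ℝ) (x y : X) (hsv : s < v) (hvt : v < t) :
    (∫⁻ u in Set.Ioo v t, ∫⁻ z, p s x u z * p u z t y * q u z ∂μ)
      ≤ ENNReal.ofReal (η + β * (t - v)) * p s x t y := by
  have msec : ∀ (a : ℝ) (c : X) (b : ℝ), Measurable fun z : X => p a c b z := fun a c b =>
    hmp.comp (measurable_const.prodMk (measurable_const.prodMk
      (measurable_const.prodMk measurable_id)))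
  have msec' : ∀ (a b : ℝ) (d : X), Measurable fun w : X => p a w b d := fun a b d =>
    hmp.comp (measurable_const.prodMk (measurable_id.prodMk
      (measurable_const.prodMk measurable_const)))
  -- joint measurability of the big integrand in (u, (z, w)) ∈ ℝ × (X × X) and variants
  have hbig : Measurable fun c : (ℝ × X) × X =>
      p s x v c.2 * p v c.2 c.1.1 c.1.2 * (p c.1.1 c.1.2 t y * q c.1.1 c.1.2) := by
    have h1 : Measurable fun c : (ℝ × X) × X => p s x v c.2 :=
      (msec s x v).comp measurable_snd
    have h2 : Measurable fun c : (ℝ × X) × X => p v c.2 c.1.1 c.1.2 :=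
      hmp.comp (measurable_const.prodMk (measurable_snd.prodMk
        (measurable_fst.fst.prodMk measurable_fst.snd)))
    have h3 : Measurable fun c : (ℝ × X) × X => p c.1.1 c.1.2 t y :=
      hmp.comp (measurable_fst.fst.prodMk (measurable_fst.snd.prodMk
        (measurable_const.prodMk measurable_const)))
    have h4 : Measurable fun c : (ℝ × X) × X => q c.1.1 c.1.2 := hmq.comp measurable_fst
    exact (h1.mul h2).mul (h3.mul h4)
  calc
    (∫⁻ u in Set.Ioo v t, ∫⁻ z, p s x u z * p u z t y * q u z ∂μ)
      = ∫⁻ u in Set.Ioo v t, ∫⁻ z, ∫⁻ w, p s x v w * p v w u z * (p u z t y * q u z) ∂μ ∂μ := by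
        refine setLIntegral_congr_fun measurableSet_Ioo (fun u hu => ?_)
        refine lintegral_congr fun z => ?_
        rw [← hCK s v u x z hsv hu.1, mul_assoc,
          ← lintegral_mul_const (f := fun w => p s x v w * p v w u z) _ ((msec s x v).mul (msec' v u z))]
    _ = ∫⁻ u in Set.Ioo v t, ∫⁻ w, ∫⁻ z, p s x v w * p v w u z * (p u z t y * q u z) ∂μ ∂μ := by
        refine setLIntegral_congr_fun measurableSet_Ioo (fun u hu => ?_)
        refine lintegral_lintegral_swap ?_
        have : Measurable fun c : X × X =>
            p s x v c.2 * p v c.2 u c.1 * (p u c.1 t y * q u c.1) :=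
          hbig.comp ((measurable_const.prodMk measurable_fst).prodMk measurable_snd)
        exact this.aemeasurable
    _ = ∫⁻ w : X, (∫⁻ u in Set.Ioo v t, ∫⁻ z, p s x v w * p v w u z * (p u z t y * q u z) ∂μ) ∂μ := by
        refine lintegral_lintegral_swap ?_
        have hjm : Measurable fun c : ℝ × X => ∫⁻ z,
            p s x v c.2 * p v c.2 c.1 z * (p c.1 z t y * q c.1 z) ∂μ := by
          refine Measurable.lintegral_prod_right' (f := fun d : (ℝ × X) × X =>
            p s x v d.1.2 * p v d.1.2 d.1.1 d.2 * (p d.1.1 d.2 t y * q d.1.1 d.2)) ?_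
          exact hbig.comp (((measurable_fst.fst.prodMk measurable_snd)).prodMk
            measurable_fst.snd)
        exact hjm.aemeasurable
    _ = ∫⁻ w : X, p s x v w *
          (∫⁻ u in Set.Ioo v t, ∫⁻ z, p v w u z * p u z t y * q u z ∂μ) ∂μ := by
        refine lintegral_congr fun w => ?_
        rw [← lintegral_const_mul' (p s x v w) _ (hpos s v x w hsv).2.ne]
        refine lintegral_congr fun u => ?_
        rw [← lintegral_const_mul' (p s x v w) _ (hpos s v x w hsv).2.ne]
        refine lintegral_congr fun z => ?_
        ring
    _ ≤ ∫⁻ w, p s x v w * (ENNReal.ofReal (η + β * (t - v)) * p v w t y) ∂μ :=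
        lintegral_mono fun w => mul_le_mul_right (hbound v t w y hvt) _
    _ = ENNReal.ofReal (η + β * (t - v)) * ∫⁻ w, p s x v w * p v w t y ∂μ := by
        rw [← lintegral_const_mul' _ _ ENNReal.ofReal_ne_top]
        refine lintegral_congr fun w => ?_; ring
    _ = ENNReal.ofReal (η + β * (t - v)) * p s x t y := by
        rw [hCK s v t x y hsv hvt]

lemma weighted_bound (μ : Measure X) [SFinite μ]
    (p : ℝ → X → ℝ → X → ℝ≥0∞) (q : ℝ → X → ℝ≥0∞)
    (hmp : Measurable fun a : ℝ × X × ℝ × X => p a.1 a.2.1 a.2.2.1 a.2.2.2)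
    (hmq : Measurable fun a : ℝ × X => q a.1 a.2)
    (hpos : ∀ s t : ℝ, ∀ x y : X, s < t → 0 < p s x t y ∧ p s x t y < ⊤)
    (hCK : ∀ s u t : ℝ, ∀ x y : X, s < u → u < t →
      ∫⁻ z, p s x u z * p u z t y ∂μ = p s x t y)
    (η β : ℝ) (hη0 : 0 ≤ η) (hη1 : η < 1) (hβ : 0 ≤ β)
    (hbound : ∀ s t : ℝ, ∀ x y : X, s < t →
      (∫⁻ u in Set.Ioo s t, ∫⁻ z, p s x u z * p u z t y * q u z ∂μ)
        ≤ ENNReal.ofReal (η + β * (t - s)) * p s x t y)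
    (htail : ∀ s v t : ℝ, ∀ x y : X, s < v → v < t →
      (∫⁻ u in Set.Ioo v t, ∫⁻ z, p s x u z * p u z t y * q u z ∂μ)
        ≤ ENNReal.ofReal (η + β * (t - v)) * p s x t y)
    (s t : ℝ) (x y : X) (hst : s < t) :
    (∫⁻ u in Set.Ioo s t, ENNReal.ofReal ((1 - η)⁻¹ * Real.exp (β * (1 - η)⁻¹ * (u - s))) *
        ∫⁻ z, p s x u z * p u z t y * q u z ∂μ)
      ≤ ENNReal.ofReal ((1 - η)⁻¹ * Real.exp (β * (1 - η)⁻¹ * (t - s)) - 1) * p s x t y := by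
  have h1η : (0 : ℝ) < 1 - η := by linarith
  set C : ℝ := (1 - η)⁻¹ with hCdef
  have hC0 : 0 < C := inv_pos.mpr h1η
  have hηC : η * C + 1 = C := by rw [hCdef]; field_simp; ring
  set g : ℝ → ℝ≥0∞ := fun u => ∫⁻ z, p s x u z * p u z t y * q u z ∂μ with hgdef
  have hg : Measurable g := by
    refine Measurable.lintegral_prod_right'
      (f := fun c : ℝ × X => p s x c.1 c.2 * p c.1 c.2 t y * q c.1 c.2) ?_
    exact ((hmp.comp (measurable_const.prodMk (measurable_const.prodMk
        (measurable_fst.prodMk measurable_snd)))).mul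
      (hmp.comp (measurable_fst.prodMk (measurable_snd.prodMk
        (measurable_const.prodMk measurable_const))))).mul hmq
  have hcont : Continuous fun v : ℝ => β * C ^ 2 * Real.exp (β * C * (v - s)) := by
    continuity
  have hhofm : Measurable fun v : ℝ =>
      ENNReal.ofReal (β * C ^ 2 * Real.exp (β * C * (v - s))) :=
    hcont.measurable.ennreal_ofReal
  have hofnn : ∀ v : ℝ, 0 ≤ β * C ^ 2 * Real.exp (β * C * (v - s)) := fun v =>
    mul_nonneg (mul_nonneg hβ (sq_nonneg C)) (Real.exp_pos _).le
  -- decomposition of the weight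
  have hdecomp : ∀ u, s ≤ u →
      ENNReal.ofReal (C * Real.exp (β * C * (u - s))) = ENNReal.ofReal C
        + ∫⁻ v in Set.Ioo s u, ENNReal.ofReal (β * C ^ 2 * Real.exp (β * C * (v - s))) := by
    intro u hsu
    have hexp1 : 1 ≤ Real.exp (β * C * (u - s)) :=
      Real.one_le_exp (mul_nonneg (mul_nonneg hβ hC0.le) (by linarith))
    have hH : (∫⁻ v in Set.Ioo s u, ENNReal.ofReal (β * C ^ 2 * Real.exp (β * C * (v - s))))
        = ENNReal.ofReal (C * Real.exp (β * C * (u - s)) - C) := by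
      have hInt : IntegrableOn (fun v => β * C ^ 2 * Real.exp (β * C * (v - s)))
          (Set.Ioo s u) volume := by
        exact (Continuous.integrableOn_Icc (by continuity)).mono_set Set.Ioo_subset_Icc_self
      rw [← ofReal_integral_eq_lintegral_ofReal hInt (ae_of_all _ fun v => hofnn v)]
      congr 1
      rw [← integral_Ioc_eq_integral_Ioo, ← intervalIntegral.integral_of_le hsu, my_intA']
    rw [hH, ← ENNReal.ofReal_add hC0.le (by nlinarith)]
    congr 1; ring
  -- split the integral
  have hsplit : (∫⁻ u in Set.Ioo s t,
        ENNReal.ofReal (C * Real.exp (β * C * (u - s))) * g u)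
      = (∫⁻ u in Set.Ioo s t, ENNReal.ofReal C * g u)
        + ∫⁻ u in Set.Ioo s t,
            (∫⁻ v in Set.Ioo s u, ENNReal.ofReal (β * C ^ 2 * Real.exp (β * C * (v - s)))) * g u := by
    rw [← lintegral_add_left (f := fun u => ENNReal.ofReal C * g u) (measurable_const.mul hg)]
    refine setLIntegral_congr_fun measurableSet_Ioo (fun u hu => ?_)
    rw [hdecomp u hu.1.le, add_mul]
  -- first piece
  have hT1 : (∫⁻ u in Set.Ioo s t, ENNReal.ofReal C * g u)
      ≤ ENNReal.ofReal C * (ENNReal.ofReal (η + β * (t - s)) * p s x t y) := by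
    rw [lintegral_const_mul' _ _ ENNReal.ofReal_ne_top]
    exact mul_le_mul_right (hbound s t x y hst) _
  -- second piece : swap the two real integrals
  have hset2 : MeasurableSet {d : ℝ × ℝ | s < d.2 ∧ d.2 < d.1 ∧ d.1 < t} := by
    have h1 := measurableSet_lt (measurable_const : Measurable fun _ : ℝ × ℝ => s)
      (measurable_snd : Measurable fun d : ℝ × ℝ => d.2)
    have h2 := measurableSet_lt (measurable_snd : Measurable fun d : ℝ × ℝ => d.2)
      (measurable_fst : Measurable fun d : ℝ × ℝ => d.1)
    have h3 := measurableSet_lt (measurable_fst : Measurable fun d : ℝ × ℝ => d.1)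
      (measurable_const : Measurable fun _ : ℝ × ℝ => t)
    exact h1.inter (h2.inter h3)
  have he2 : Measurable fun d : ℝ × ℝ =>
      ({d : ℝ × ℝ | s < d.2 ∧ d.2 < d.1 ∧ d.1 < t}).indicator
        (fun d => ENNReal.ofReal (β * C ^ 2 * Real.exp (β * C * (d.2 - s))) * g d.1) d :=
    ((hhofm.comp measurable_snd).mul (hg.comp measurable_fst)).indicator hset2
  have h2 : (∫⁻ u in Set.Ioo s t,
        (∫⁻ v in Set.Ioo s u, ENNReal.ofReal (β * C ^ 2 * Real.exp (β * C * (v - s)))) * g u)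
      = ∫⁻ v in Set.Ioo s t, ENNReal.ofReal (β * C ^ 2 * Real.exp (β * C * (v - s)))
          * ∫⁻ u in Set.Ioo v t, g u := by
    have e2eq1 : (∫⁻ u in Set.Ioo s t,
          (∫⁻ v in Set.Ioo s u, ENNReal.ofReal (β * C ^ 2 * Real.exp (β * C * (v - s)))) * g u)
        = ∫⁻ u, ∫⁻ v, ({d : ℝ × ℝ | s < d.2 ∧ d.2 < d.1 ∧ d.1 < t}).indicator
            (fun d => ENNReal.ofReal (β * C ^ 2 * Real.exp (β * C * (d.2 - s))) * g d.1) (u, v) := by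
      rw [← lintegral_indicator measurableSet_Ioo]
      refine lintegral_congr fun u => ?_
      by_cases hu : u ∈ Set.Ioo s t
      · rw [Set.indicator_of_mem hu, ← lintegral_mul_const _ hhofm,
          ← lintegral_indicator measurableSet_Ioo]
        refine lintegral_congr fun v => ?_
        by_cases hv : v ∈ Set.Ioo s u
        · rw [Set.indicator_of_mem hv, Set.indicator_of_mem
            (show (u, v) ∈ {d : ℝ × ℝ | s < d.2 ∧ d.2 < d.1 ∧ d.1 < t} from ⟨hv.1, hv.2, hu.2⟩)]
        · rw [Set.indicator_of_notMem hv, Set.indicator_of_notMem]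
          intro hc; exact hv ⟨hc.1, hc.2.1⟩
      · rw [Set.indicator_of_notMem hu]
        symm
        have hz : ∀ v : ℝ, ({d : ℝ × ℝ | s < d.2 ∧ d.2 < d.1 ∧ d.1 < t}).indicator
            (fun d => ENNReal.ofReal (β * C ^ 2 * Real.exp (β * C * (d.2 - s))) * g d.1) (u, v)
            = 0 := fun v => Set.indicator_of_notMem
          (fun hc => hu ⟨hc.1.trans hc.2.1, hc.2.2⟩) _
        simp only [hz, lintegral_zero]
    have e2eq2 : (∫⁻ u, ∫⁻ v, ({d : ℝ × ℝ | s < d.2 ∧ d.2 < d.1 ∧ d.1 < t}).indicator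
            (fun d => ENNReal.ofReal (β * C ^ 2 * Real.exp (β * C * (d.2 - s))) * g d.1) (u, v))
        = ∫⁻ v, ∫⁻ u, ({d : ℝ × ℝ | s < d.2 ∧ d.2 < d.1 ∧ d.1 < t}).indicator
            (fun d => ENNReal.ofReal (β * C ^ 2 * Real.exp (β * C * (d.2 - s))) * g d.1) (u, v) :=
      lintegral_lintegral_swap he2.aemeasurable
    have e2eq3 : (∫⁻ v, ∫⁻ u, ({d : ℝ × ℝ | s < d.2 ∧ d.2 < d.1 ∧ d.1 < t}).indicator
            (fun d => ENNReal.ofReal (β * C ^ 2 * Real.exp (β * C * (d.2 - s))) * g d.1) (u, v))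
        = ∫⁻ v in Set.Ioo s t, ENNReal.ofReal (β * C ^ 2 * Real.exp (β * C * (v - s)))
            * ∫⁻ u in Set.Ioo v t, g u := by
      rw [← lintegral_indicator measurableSet_Ioo]
      refine lintegral_congr fun v => ?_
      by_cases hv : v ∈ Set.Ioo s t
      · rw [Set.indicator_of_mem hv, ← lintegral_const_mul' _ _ ENNReal.ofReal_ne_top,
          ← lintegral_indicator measurableSet_Ioo]
        refine lintegral_congr fun u => ?_
        by_cases hu : u ∈ Set.Ioo v t
        · rw [Set.indicator_of_mem
            (show (u, v) ∈ {d : ℝ × ℝ | s < d.2 ∧ d.2 < d.1 ∧ d.1 < t} from ⟨hv.1, hu.1, hu.2⟩),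
            Set.indicator_of_mem hu]
        · rw [Set.indicator_of_notMem hu, Set.indicator_of_notMem]
          intro hc; exact hu ⟨hc.2.1, hc.2.2⟩
      · rw [Set.indicator_of_notMem hv]
        have hz : ∀ u : ℝ, ({d : ℝ × ℝ | s < d.2 ∧ d.2 < d.1 ∧ d.1 < t}).indicator
            (fun d => ENNReal.ofReal (β * C ^ 2 * Real.exp (β * C * (d.2 - s))) * g d.1) (u, v)
            = 0 := fun u => Set.indicator_of_notMem
          (fun hc => hv ⟨hc.1, hc.2.1.trans hc.2.2⟩) _
        simp only [hz, lintegral_zero]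
    rw [e2eq1, e2eq2, e2eq3]
  -- bound the second piece
  have hBval : (0:ℝ) ≤ Real.exp (β * C * (t - s)) * (η * C + 1) - (η * C + β * C * (t - s) + 1) := by
    rw [← my_intB]
    apply intervalIntegral.integral_nonneg hst.le
    intro v hv
    exact mul_nonneg (hofnn v) (by nlinarith [hv.2, mul_nonneg hβ (sub_nonneg.mpr hv.2)])
  have hcont2 : Continuous fun v : ℝ =>
      β * C ^ 2 * Real.exp (β * C * (v - s)) * (η + β * (t - v)) :=
    hcont.mul (continuous_const.add (continuous_const.mul (continuous_const.sub continuous_id)))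
  have hT2 : (∫⁻ v in Set.Ioo s t, ENNReal.ofReal (β * C ^ 2 * Real.exp (β * C * (v - s)))
        * ∫⁻ u in Set.Ioo v t, g u)
      ≤ ENNReal.ofReal (Real.exp (β * C * (t - s)) * (η * C + 1)
          - (η * C + β * C * (t - s) + 1)) * p s x t y := by
    calc (∫⁻ v in Set.Ioo s t, ENNReal.ofReal (β * C ^ 2 * Real.exp (β * C * (v - s)))
          * ∫⁻ u in Set.Ioo v t, g u)
        ≤ ∫⁻ v in Set.Ioo s t,
            ENNReal.ofReal (β * C ^ 2 * Real.exp (β * C * (v - s)) * (η + β * (t - v)))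
              * p s x t y := by
          refine lintegral_mono_ae ((ae_restrict_mem measurableSet_Ioo).mono fun v hv => ?_)
          calc ENNReal.ofReal (β * C ^ 2 * Real.exp (β * C * (v - s))) * ∫⁻ u in Set.Ioo v t, g u
              ≤ ENNReal.ofReal (β * C ^ 2 * Real.exp (β * C * (v - s)))
                * (ENNReal.ofReal (η + β * (t - v)) * p s x t y) :=
              mul_le_mul_right (htail s v t x y hv.1 hv.2) _
            _ = ENNReal.ofReal (β * C ^ 2 * Real.exp (β * C * (v - s)) * (η + β * (t - v)))
                * p s x t y := by
              rw [← mul_assoc, ← ENNReal.ofReal_mul (hofnn v)]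
      _ = (∫⁻ v in Set.Ioo s t,
            ENNReal.ofReal (β * C ^ 2 * Real.exp (β * C * (v - s)) * (η + β * (t - v))))
              * p s x t y := lintegral_mul_const _ hcont2.measurable.ennreal_ofReal
      _ = ENNReal.ofReal (∫ v in Set.Ioo s t,
            β * C ^ 2 * Real.exp (β * C * (v - s)) * (η + β * (t - v))) * p s x t y := by
          congr 1
          rw [← ofReal_integral_eq_lintegral_ofReal]
          · exact (Continuous.integrableOn_Icc hcont2).mono_set Set.Ioo_subset_Icc_self
          · filter_upwards [ae_restrict_mem measurableSet_Ioo] with v hv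
            exact mul_nonneg (hofnn v)
              (by nlinarith [mul_nonneg hβ (sub_nonneg.mpr hv.2.le)])
      _ = ENNReal.ofReal (Real.exp (β * C * (t - s)) * (η * C + 1)
          - (η * C + β * C * (t - s) + 1)) * p s x t y := by
          rw [← integral_Ioc_eq_integral_Ioo, ← intervalIntegral.integral_of_le hst.le, my_intB]
  -- combine
  refine le_trans (le_of_eq (by rw [hsplit, h2])) ?_
  refine le_trans (add_le_add hT1 hT2) (le_of_eq ?_)
  have hre : C * (η + β * (t - s)) + (Real.exp (β * C * (t - s)) * (η * C + 1)
      - (η * C + β * C * (t - s) + 1)) = C * Real.exp (β * C * (t - s)) - 1 := by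
    linear_combination Real.exp (β * C * (t - s)) * hηC
  rw [← mul_assoc, ← ENNReal.ofReal_mul hC0.le, ← add_mul, ← ENNReal.ofReal_add
    (mul_nonneg hC0.le (by nlinarith [mul_nonneg hβ (sub_nonneg.mpr hst.le)])) hBval, hre]


lemma partial_sum_bound (μ : Measure X) [SFinite μ]
    (p : ℝ → X → ℝ → X → ℝ≥0∞) (q : ℝ → X → ℝ≥0∞)
    (hmp : Measurable fun a : ℝ × X × ℝ × X => p a.1 a.2.1 a.2.2.1 a.2.2.2)
    (hmq : Measurable fun a : ℝ × X => q a.1 a.2)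
    (hpos : ∀ s t : ℝ, ∀ x y : X, s < t → 0 < p s x t y ∧ p s x t y < ⊤)
    (hCK : ∀ s u t : ℝ, ∀ x y : X, s < u → u < t →
      ∫⁻ z, p s x u z * p u z t y ∂μ = p s x t y)
    (η β : ℝ) (hη0 : 0 ≤ η) (hη1 : η < 1) (hβ : 0 ≤ β)
    (hbound : ∀ s t : ℝ, ∀ x y : X, s < t →
      (∫⁻ u in Set.Ioo s t, ∫⁻ z, p s x u z * p u z t y * q u z ∂μ)
        ≤ ENNReal.ofReal (η + β * (t - s)) * p s x t y)
    (n : ℕ) : ∀ s t : ℝ, ∀ x y : X, s < t →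
      (∑ k ∈ Finset.range (n+1), pseq μ p q k s x t y)
        ≤ ENNReal.ofReal ((1 - η)⁻¹ * Real.exp (β * (1 - η)⁻¹ * (t - s))) * p s x t y := by
  have h1η : (0:ℝ) < 1 - η := by linarith
  have hC0 : (0:ℝ) < (1 - η)⁻¹ := inv_pos.mpr h1η
  have hC1 : (1:ℝ) ≤ (1 - η)⁻¹ := by nlinarith [mul_inv_cancel₀ (ne_of_gt h1η)]
  have hFone : ∀ s t : ℝ, s ≤ t →
      (1:ℝ) ≤ (1 - η)⁻¹ * Real.exp (β * (1 - η)⁻¹ * (t - s)) := by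
    intro s t hst
    nlinarith [Real.one_le_exp (mul_nonneg (mul_nonneg hβ hC0.le) (sub_nonneg.mpr hst))]
  induction n with
  | zero =>
    intro s t x y hst
    have h0 : (∑ k ∈ Finset.range 1, pseq μ p q k s x t y) = p s x t y := by
      rw [Finset.sum_range_one]; rfl
    rw [h0]
    refine le_mul_of_one_le_left zero_le ?_
    rw [← ENNReal.ofReal_one]
    exact ENNReal.ofReal_le_ofReal (hFone s t hst.le)
  | succ n ih =>
    intro s t x y hst
    have hfz : ∀ i : ℕ, Measurable fun c : ℝ × X =>
        pseq μ p q i s x c.1 c.2 * p c.1 c.2 t y * q c.1 c.2 := fun i =>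
      ((pseq_meas μ p q hmp hmq i s x).mul
        (hmp.comp (measurable_fst.prodMk (measurable_snd.prodMk
          (measurable_const.prodMk measurable_const))))).mul hmq
    have hfu : ∀ i : ℕ, Measurable fun u : ℝ =>
        ∫⁻ z, pseq μ p q i s x u z * p u z t y * q u z ∂μ := fun i =>
      Measurable.lintegral_prod_right' (hfz i)
    rw [Finset.sum_range_succ']
    have hrw : (∑ i ∈ Finset.range (n+1), pseq μ p q (i+1) s x t y)
        = ∫⁻ u in Set.Ioo s t, ∫⁻ z,
            (∑ i ∈ Finset.range (n+1), pseq μ p q i s x u z) * p u z t y * q u z ∂μ := by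
      calc (∑ i ∈ Finset.range (n+1), pseq μ p q (i+1) s x t y)
          = ∑ i ∈ Finset.range (n+1), ∫⁻ u in Set.Ioo s t, ∫⁻ z,
              pseq μ p q i s x u z * p u z t y * q u z ∂μ := rfl
        _ = ∫⁻ u in Set.Ioo s t, ∑ i ∈ Finset.range (n+1), ∫⁻ z,
              pseq μ p q i s x u z * p u z t y * q u z ∂μ :=
            (lintegral_finset_sum _ fun i _ => hfu i).symm
        _ = ∫⁻ u in Set.Ioo s t, ∫⁻ z, ∑ i ∈ Finset.range (n+1),
              pseq μ p q i s x u z * p u z t y * q u z ∂μ := by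
            refine lintegral_congr fun u => ?_
            exact (lintegral_finset_sum _ fun i _ =>
              (hfz i).comp measurable_prodMk_left).symm
        _ = _ := by
            refine lintegral_congr fun u => ?_
            refine lintegral_congr fun z => ?_
            rw [Finset.sum_mul, Finset.sum_mul]
    rw [hrw]
    have hstep : (∫⁻ u in Set.Ioo s t, ∫⁻ z,
          (∑ i ∈ Finset.range (n+1), pseq μ p q i s x u z) * p u z t y * q u z ∂μ)
        ≤ ENNReal.ofReal ((1 - η)⁻¹ * Real.exp (β * (1 - η)⁻¹ * (t - s)) - 1) * p s x t y := by
      refine le_trans ?_ (weighted_bound μ p q hmp hmq hpos hCK η β hη0 hη1 hβ hbound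
        (fun s v t x y hsv hvt => tail_bound μ p q hmp hmq hpos hCK η β hbound s v t x y hsv hvt)
        s t x y hst)
      refine lintegral_mono_ae ((ae_restrict_mem measurableSet_Ioo).mono fun u hu => ?_)
      calc (∫⁻ z, (∑ i ∈ Finset.range (n+1), pseq μ p q i s x u z) * p u z t y * q u z ∂μ)
          ≤ ∫⁻ z, (ENNReal.ofReal ((1 - η)⁻¹ * Real.exp (β * (1 - η)⁻¹ * (u - s))) * p s x u z)
              * p u z t y * q u z ∂μ :=
            lintegral_mono fun z =>
              mul_le_mul_left (mul_le_mul_left (ih s u x z hu.1) _) _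
        _ = ENNReal.ofReal ((1 - η)⁻¹ * Real.exp (β * (1 - η)⁻¹ * (u - s)))
              * ∫⁻ z, p s x u z * p u z t y * q u z ∂μ := by
            rw [← lintegral_const_mul' _ _ ENNReal.ofReal_ne_top]
            refine lintegral_congr fun z => ?_; ring
    have hFnn : (0:ℝ) ≤ (1 - η)⁻¹ * Real.exp (β * (1 - η)⁻¹ * (t - s)) - 1 := by
      nlinarith [hFone s t hst.le]
    have hps0 : pseq μ p q 0 s x t y = p s x t y := rfl
    calc (∫⁻ u in Set.Ioo s t, ∫⁻ z,
          (∑ i ∈ Finset.range (n+1), pseq μ p q i s x u z) * p u z t y * q u z ∂μ)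
          + pseq μ p q 0 s x t y
        ≤ ENNReal.ofReal ((1 - η)⁻¹ * Real.exp (β * (1 - η)⁻¹ * (t - s)) - 1) * p s x t y
          + 1 * p s x t y := by
          rw [hps0, one_mul]; exact add_le_add hstep le_rfl
      _ = (ENNReal.ofReal ((1 - η)⁻¹ * Real.exp (β * (1 - η)⁻¹ * (t - s)) - 1) + 1)
            * p s x t y := (add_mul _ _ _).symm
      _ = ENNReal.ofReal ((1 - η)⁻¹ * Real.exp (β * (1 - η)⁻¹ * (t - s))) * p s x t y := by
          rw [← ENNReal.ofReal_one, ← ENNReal.ofReal_add hFnn zero_le_one]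
          norm_num

end

/-- Theorem 3.6 (main estimate): under the bound ∫∫ p p q ≤ (η + β(t-s)) p with
0 ≤ η < 1, β ≥ 0, the perturbation series satisfies
p̃_q(s,x,t,y) ≤ (1/(1-η)) exp(β(t-s)/(1-η)) p(s,x,t,y). -/
theorem perturbation_series_upper_bound {X : Type*} [MeasurableSpace X] (μ : Measure X)
    (p : ℝ → X → ℝ → X → ℝ≥0∞) (q : ℝ → X → ℝ≥0∞)
    (hmp : Measurable fun a : ℝ × X × ℝ × X => p a.1 a.2.1 a.2.2.1 a.2.2.2)
    (hmq : Measurable fun a : ℝ × X => q a.1 a.2)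
    (hzero : ∀ s t : ℝ, ∀ x y : X, t ≤ s → p s x t y = 0)
    (hpos : ∀ s t : ℝ, ∀ x y : X, s < t → 0 < p s x t y ∧ p s x t y < ⊤)
    (hCK : ∀ s u t : ℝ, ∀ x y : X, s < u → u < t →
      ∫⁻ z, p s x u z * p u z t y ∂μ = p s x t y)
    (η β : ℝ) (hη0 : 0 ≤ η) (hη1 : η < 1) (hβ : 0 ≤ β)
    (hbound : ∀ s t : ℝ, ∀ x y : X, s < t →
      (∫⁻ u in Set.Ioo s t, ∫⁻ z, p s x u z * p u z t y * q u z ∂μ)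
        ≤ ENNReal.ofReal (η + β * (t - s)) * p s x t y)
    (s t : ℝ) (x y : X) (hst : s < t) :
    ∑' n : ℕ, pseq μ p q n s x t y
      ≤ ENNReal.ofReal ((1 / (1 - η)) * Real.exp (β * (t - s) / (1 - η))) * p s x t y := by
  haveI : SigmaFinite μ := by
    refine my_sigmaFinite (f := fun z => p s x ((s+t)/2) z * p ((s+t)/2) z t y) ?_ ?_ ?_
    · exact (hmp.comp (measurable_const.prodMk (measurable_const.prodMk
          (measurable_const.prodMk measurable_id)))).mul
        (hmp.comp (measurable_const.prodMk (measurable_id.prodMk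
          (measurable_const.prodMk measurable_const))))
    · intro z
      exact ENNReal.mul_pos (hpos s ((s+t)/2) x z (by linarith)).1.ne'
        (hpos ((s+t)/2) t z y (by linarith)).1.ne'
    · rw [hCK s ((s+t)/2) t x y (by linarith) (by linarith)]
      exact (hpos s t x y hst).2
  rw [ENNReal.tsum_eq_iSup_nat]
  have harg : β * (t - s) / (1 - η) = β * (1 - η)⁻¹ * (t - s) := by ring
  rw [one_div, harg]
  refine iSup_le fun n => ?_
  match n with
  | 0 => simp
  | (m+1) =>
    exact partial_sum_bound μ p q hmp hmq hpos hCK η β hη0 hη1 hβ hbound m s t x y hst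
end
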